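/- arXiv:2605.06749 — 6 statements merged into one kernel-verified Lean document; each statement's English description precedes it below -/
import Mathlib

section
/- Let Ω be a finite set equipped with a probability measure π, let f₀ : Ω → 𝒵 be a map, and let P₀ = (f₀)_#π be the pushforward distribution on 𝒵. Let Ω₁,…,Ω_M be pairwise disjoint subsets of Ω with π(Ω_c) = α_c > 0, set ᾱ = Σ_{c=1}^M α_c, and assume the neutrality condition: for every c and every z ∈ 𝒵, P₀(z) = ℙ[f₀(ω) = z | ω ∈ Ω_c]. Let h_c : 𝒵 → 𝒵 be maps and P_c = (h_c)_#P₀. Let S₁, S₂, … be i.i.d. draws from π, set Z_i = f₀(S_i), let I_{N,c} = {i ≤ N : S_i ∈ Ω_c} with n_{N,c} = |I_{N,c}| and α_{N,c} = n_{N,c}/N, let n_{N,0} = N − Σ_c n_{N,c} and α_{N,0} = 1 − Σ_c α_{N,c}, and define the empirical measures P̂_{N,c} = (h_c)_#(n_{N,c}^{-1} Σ_{i∈I_{N,c}} δ_{Z_i}) when n_{N,c}>0, P̂_{N,0} = n_{N,0}^{-1} Σ_{i: S_i∉∪_cΩ_c} δ_{Z_i} when n_{N,0}>0 (and an arbitrary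 fixed distribution when n_{N,0}=0), and the empirical post-edit mixture P̂_N = α_{N,0} P̂_{N,0} + Σ_{c: α_{N,c}>0} α_{N,c} P̂_{N,c}. Then, almost surely, P̂_N converges pointwise on 𝒵 to P := (1 − ᾱ)P₀ + Σ_{c=1}^M α_c P_c, and for each collective c, α_{N,c} → α_c and P̂_{N,c} → P_c almost surely. -/
open Finset Filter MeasureTheory ProbabilityTheory
open scoped Classical

/-- Pushforward of a mass function `π` on a finite type under `f` :
`(f_#π)(z) = π(f⁻¹{z})`. -/
noncomputable def pushf {Ω Z : Type*} [Fintype Ω] (f : Ω → Z) (π : Ω → ℝ) : Z → ℝ :=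
  fun z => ∑ w ∈ Finset.univ.filter (fun w => f w = z), π w

/-- `sampCount S A N θ` is the number of indices `i < N` whose sampled individual
`S i θ` satisfies `A`. -/
noncomputable def sampCount {Ω Θ : Type*} (S : ℕ → Θ → Ω) (A : Ω → Prop)
    (N : ℕ) (θ : Θ) : ℕ :=
  ((Finset.range N).filter fun i => A (S i θ)).card

/-- `sampEmp S A f N θ z` is the empirical mass at `z` of the images under `f` of the
sampled individuals among the first `N` that satisfy `A` (normalized by their number). -/
noncomputable def sampEmp {Ω Z Θ : Type*} (S : ℕ → Θ → Ω) (A : Ω → Prop) (f : Ω → Z)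
    (N : ℕ) (θ : Θ) (z : Z) : ℝ :=
  (((Finset.range N).filter fun i => A (S i θ) ∧ f (S i θ) = z).card : ℝ)
    / sampCount S A N θ

/-! ### Auxiliary lemmas -/

lemma nullMeas_of_partition {Θ : Type*} [MeasurableSpace Θ] (μ : Measure Θ) [IsFiniteMeasure μ]
    {ι : Type*} [Fintype ι] (s : ι → Set Θ)
    (hcover : (⋃ i, s i) = Set.univ)
    (hsum : ∑ i, μ (s i) = μ Set.univ) : ∀ i, NullMeasurableSet (s i) μ := by
  set u : ι → Set Θ := fun i => toMeasurable μ (s i) with hu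
  have hsub : ∀ i, s i ⊆ u i := fun i => subset_toMeasurable μ (s i)
  have hmu : ∀ i, μ (u i) = μ (s i) := fun i => measure_toMeasurable (s i)
  have hmeas : ∀ i, MeasurableSet (u i) := fun i => measurableSet_toMeasurable μ (s i)
  have key : ∀ a b : ι, a ≠ b → μ (u a ∩ u b) = 0 := by
    intro a b hab
    have h1 : μ Set.univ + μ (u a ∩ u b) ≤ μ Set.univ := by
      have hcov : μ Set.univ ≤ μ (u a ∪ u b) + ∑ i ∈ (Finset.univ.erase a).erase b, μ (u i) := by
        have : (Set.univ : Set Θ) ⊆ (u a ∪ u b) ∪ ⋃ i ∈ (Finset.univ.erase a).erase b, u i := by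
          rw [← hcover]
          intro θ hθ
          simp only [Set.mem_iUnion] at hθ
          obtain ⟨i, hi⟩ := hθ
          by_cases hia : i = a
          · exact Or.inl (Or.inl (hia ▸ hsub i hi))
          by_cases hib : i = b
          · exact Or.inl (Or.inr (hib ▸ hsub i hi))
          · refine Or.inr ?_
            simp only [Set.mem_iUnion]
            exact ⟨i, by simp [hia, hib], hsub i hi⟩
        calc μ Set.univ ≤ μ ((u a ∪ u b) ∪ ⋃ i ∈ (Finset.univ.erase a).erase b, u i) :=
              measure_mono this
          _ ≤ μ (u a ∪ u b) + μ (⋃ i ∈ (Finset.univ.erase a).erase b, u i) := measure_union_le _ _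
          _ ≤ μ (u a ∪ u b) + ∑ i ∈ (Finset.univ.erase a).erase b, μ (u i) := by
              gcongr; exact measure_biUnion_finset_le _ _
      have h2 : μ (u a ∪ u b) + μ (u a ∩ u b) = μ (u a) + μ (u b) :=
        measure_union_add_inter (u a) (hmeas b)
      have h3 : μ (u a) + μ (u b) + ∑ i ∈ (Finset.univ.erase a).erase b, μ (u i)
          = ∑ i, μ (u i) := by
        rw [← Finset.add_sum_erase _ _ (Finset.mem_univ a)]
        rw [← Finset.add_sum_erase _ _ (Finset.mem_erase.2 ⟨Ne.symm hab, Finset.mem_univ b⟩)]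
        ring
      have h4 : ∑ i, μ (u i) = μ Set.univ := by
        rw [← hsum]; exact Finset.sum_congr rfl fun i _ => hmu i
      calc μ Set.univ + μ (u a ∩ u b)
          ≤ μ (u a ∪ u b) + ∑ i ∈ (Finset.univ.erase a).erase b, μ (u i) + μ (u a ∩ u b) := by
            gcongr
        _ = μ (u a) + μ (u b) + ∑ i ∈ (Finset.univ.erase a).erase b, μ (u i) := by
            rw [← h2]; ring
        _ = μ Set.univ := by rw [h3, h4]
    have hfin : μ Set.univ ≠ ⊤ := measure_ne_top μ _
    have := (ENNReal.add_le_add_iff_left hfin).1 (h1.trans (le_of_eq (add_zero _).symm))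
    exact le_antisymm this zero_le
  intro a
  have hnull : μ (u a \ s a) = 0 := by
    have hss : u a \ s a ⊆ ⋃ b ∈ Finset.univ.erase a, (u a ∩ u b) := by
      intro θ hθ
      have hθu : θ ∈ Set.univ := Set.mem_univ θ
      rw [← hcover] at hθu
      simp only [Set.mem_iUnion] at hθu
      obtain ⟨b, hb⟩ := hθu
      have hba : b ≠ a := by rintro rfl; exact hθ.2 hb
      simp only [Set.mem_iUnion]
      exact ⟨b, by simp [hba], hθ.1, hsub b hb⟩
    refine measure_mono_null hss ?_
    refine (measure_biUnion_null_iff (Finset.univ.erase a).countable_toSet).2 ?_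
    intro b hb
    exact key a b (by simp at hb; exact fun h => hb (h ▸ rfl))
  refine (hmeas a).nullMeasurableSet.congr ?_
  rw [Filter.eventuallyEq_set]
  have : μ {θ | ¬ (θ ∈ u a ↔ θ ∈ s a)} = 0 := by
    refine measure_mono_null ?_ hnull
    intro θ hθ
    simp only [Set.mem_setOf_eq, iff_iff_implies_and_implies, not_and_or, not_forall] at hθ
    rcases hθ with h | h
    · obtain ⟨h1, h2⟩ := h; exact ⟨h1, h2⟩
    · obtain ⟨h1, h2⟩ := h; exact absurd (hsub a h1) h2
  exact (measure_eq_zero_iff_ae_notMem.1 this).mono fun θ h => by simpa using not_not.1 (by simpa using h)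

lemma freq {Ω Θ : Type*} [Fintype Ω] [MeasurableSpace Θ] (μ : Measure Θ)
    [IsProbabilityMeasure μ] (π : Ω → ℝ) (hπnn : ∀ ω, 0 ≤ π ω) (hπsum : ∑ ω, π ω = 1)
    (S : ℕ → Θ → Ω)
    (hindep : iIndepFun (m := fun _ : ℕ => (⊤ : MeasurableSpace Ω)) S μ)
    (hlaw : ∀ (i : ℕ) (w : Ω), μ {θ | S i θ = w} = ENNReal.ofReal (π w))
    (A : Ω → Prop) :
    ∀ᵐ θ ∂μ, Filter.Tendsto (fun N => (sampCount S A N θ : ℝ) / N) atTop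
      (nhds (∑ ω ∈ Finset.univ.filter A, π ω)) := by
  set p : ℝ := ∑ ω ∈ Finset.univ.filter A, π ω with hp
  have hpnn : 0 ≤ p := Finset.sum_nonneg fun ω _ => hπnn ω
  have hNM : ∀ (i : ℕ) (w : Ω), NullMeasurableSet {θ | S i θ = w} μ := by
    intro i
    refine nullMeas_of_partition μ _ ?_ ?_
    · ext θ; simp only [Set.mem_iUnion, Set.mem_setOf_eq, Set.mem_univ, iff_true]
      exact ⟨S i θ, rfl⟩
    · simp only [hlaw i, measure_univ]
      rw [← ENNReal.ofReal_sum_of_nonneg fun w _ => hπnn w, hπsum, ENNReal.ofReal_one]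
  set B : ℕ → Set Θ := fun i => {θ | A (S i θ)} with hB
  have hBunion : ∀ i, B i = ⋃ w ∈ Finset.univ.filter A, {θ | S i θ = w} := by
    intro i; ext θ
    simp only [hB, Set.mem_setOf_eq, Set.mem_iUnion, Finset.mem_filter, Finset.mem_univ,
      true_and]
    constructor
    · intro hA; exact ⟨S i θ, hA, rfl⟩
    · rintro ⟨w, hw, rfl⟩; exact hw
  have hBnm : ∀ i, NullMeasurableSet (B i) μ := by
    intro i
    rw [hBunion i]
    exact NullMeasurableSet.biUnion (Finset.univ.filter A).countable_toSet
      fun w _ => hNM i w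
  have hBmeasure : ∀ i, μ (B i) = ENNReal.ofReal p := by
    intro i
    rw [hBunion i, measure_biUnion_finset₀ ?_ fun w _ => hNM i w]
    · rw [hp, ENNReal.ofReal_sum_of_nonneg fun w _ => hπnn w]
      exact Finset.sum_congr rfl fun w _ => hlaw i w
    · intro a _ b _ hab
      refine (Disjoint.aedisjoint ?_)
      rw [Set.disjoint_left]
      rintro θ rfl h
      exact hab h
  choose t htsub htm hteq using fun i => (hBnm i).exists_measurable_subset_ae_eq
  set X : ℕ → Θ → ℝ := fun i => (t i).indicator fun _ => (1 : ℝ) with hX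
  have hXmeas : ∀ i, Measurable (X i) := fun i => measurable_const.indicator (htm i)
  have hXeq : ∀ i, X i =ᵐ[μ] fun θ => if A (S i θ) then (1 : ℝ) else 0 := by
    intro i
    filter_upwards [hteq i] with θ hθ
    have h2 : (θ ∈ t i) = (θ ∈ B i) := hθ
    simp only [hX, Set.indicator, h2, hB, Set.mem_setOf_eq]
  have hμt : ∀ i, μ (t i) = ENNReal.ofReal p := fun i =>
    (measure_congr (hteq i)).trans (hBmeasure i)
  have hint : Integrable (X 0) μ := (integrable_const (1 : ℝ)).indicator (htm 0)
  have hident : ∀ i, IdentDistrib (X i) (X 0) μ μ := by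
    intro i
    refine ⟨(hXmeas i).aemeasurable, (hXmeas 0).aemeasurable, ?_⟩
    refine Measure.ext fun s hs => ?_
    rw [Measure.map_apply (hXmeas i) hs, Measure.map_apply (hXmeas 0) hs]
    have hpre : ∀ j, X j ⁻¹' s =
        (if (1 : ℝ) ∈ s then t j else ∅) ∪ (if (0 : ℝ) ∈ s then (t j)ᶜ else ∅) := by
      intro j; ext θ
      by_cases hθ : θ ∈ t j <;>
        by_cases h1 : (1 : ℝ) ∈ s <;> by_cases h0 : (0 : ℝ) ∈ s <;>
        simp [hX, Set.indicator, hθ, h1, h0]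
    rw [hpre i, hpre 0]
    by_cases h1 : (1 : ℝ) ∈ s <;> by_cases h0 : (0 : ℝ) ∈ s <;>
      simp only [h1, h0, if_true, if_false, Set.union_empty, Set.empty_union]
    · rw [Set.union_compl_self, Set.union_compl_self]
    · rw [hμt i, hμt 0]
    · rw [measure_compl (htm i) (measure_ne_top μ _),
        measure_compl (htm 0) (measure_ne_top μ _), hμt i, hμt 0]
  have hindepX : Pairwise (Function.onFun (IndepFun · · μ) X) := by
    intro i j hij
    have base := hindep.indepFun (f := S) hij
    have mg : @Measurable Ω ℝ ⊤ _ (fun w : Ω => if A w then (1 : ℝ) else 0) :=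
      measurable_from_top
    have := base.comp mg mg
    exact IndepFun.congr this (hXeq i).symm (hXeq j).symm
  have hexp : μ[X 0] = p := by
    rw [hX]
    rw [integral_indicator_const (1 : ℝ) (htm 0), measureReal_def, hμt 0, smul_eq_mul, mul_one,
      ENNReal.toReal_ofReal hpnn]
  have hae : ∀ᵐ θ ∂μ, ∀ i, X i θ = if A (S i θ) then (1 : ℝ) else 0 :=
    (ae_all_iff).2 fun i => hXeq i
  filter_upwards [strong_law_ae_real X hint hindepX hident, hae] with θ hθ hXθ
  rw [hexp] at hθ
  refine hθ.congr fun N => ?_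
  congr 1
  rw [show ∑ i ∈ Finset.range N, X i θ
        = ∑ i ∈ Finset.range N, (if A (S i θ) then (1 : ℝ) else 0) from
      Finset.sum_congr rfl fun i _ => hXθ i, Finset.sum_boole]
  rfl

lemma sampCount_mono {Ω Θ : Type*} (S : ℕ → Θ → Ω) {A B : Ω → Prop}
    (hAB : ∀ ω, A ω → B ω) (N : ℕ) (θ : Θ) :
    sampCount S A N θ ≤ sampCount S B N θ := by
  refine Finset.card_le_card ?_
  intro i hi
  simp only [Finset.mem_filter] at hi ⊢
  exact ⟨hi.1, hAB _ hi.2⟩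

lemma sampCount_le {Ω Θ : Type*} (S : ℕ → Θ → Ω) (A : Ω → Prop) (N : ℕ) (θ : Θ) :
    sampCount S A N θ ≤ N := by
  simpa [sampCount] using Finset.card_filter_le (Finset.range N) (fun i => A (S i θ))

lemma sampCount_add_not {Ω Θ : Type*} (S : ℕ → Θ → Ω) (A : Ω → Prop) (N : ℕ) (θ : Θ) :
    sampCount S A N θ + sampCount S (fun ω => ¬ A ω) N θ = N := by
  simp only [sampCount]
  rw [Finset.card_filter_add_card_filter_not, Finset.card_range]

lemma count_disjoint_sum {Ω Θ : Type*} {M : ℕ} (S : ℕ → Θ → Ω) (Ωc : Fin M → Finset Ω)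
    (hdisj : ∀ c d : Fin M, c ≠ d → Disjoint (Ωc c) (Ωc d)) (N : ℕ) (θ : Θ) :
    ∑ c, sampCount S (· ∈ Ωc c) N θ = sampCount S (fun ω => ∃ c, ω ∈ Ωc c) N θ := by
  simp only [sampCount]
  rw [← Finset.card_biUnion]
  · congr 1
    ext i
    simp only [Finset.mem_filter, Finset.mem_biUnion, Finset.mem_univ, true_and]
    tauto
  · intro a _ b _ hab
    rw [Function.onFun, Finset.disjoint_left]
    intro i hi hi'
    simp only [Finset.mem_filter] at hi hi'
    exact Finset.disjoint_left.1 (hdisj a b hab) hi.2 hi'.2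

lemma pushf_comp_eq {Ω Z : Type*} [Fintype Ω] [Fintype Z] (π : Ω → ℝ) (f0 : Ω → Z) (g : Z → Z)
    (Ω1 : Finset Ω) (a : ℝ)
    (hneutral : ∀ z', a * pushf f0 π z' = ∑ ω ∈ Ω1.filter (fun ω => f0 ω = z'), π ω) (z : Z) :
    a * pushf g (pushf f0 π) z = ∑ ω ∈ Ω1.filter (fun ω => g (f0 ω) = z), π ω := by
  rw [show pushf g (pushf f0 π) z = ∑ z' ∈ Finset.univ.filter (fun z' => g z' = z),
        pushf f0 π z' from rfl, Finset.mul_sum]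
  rw [Finset.sum_congr rfl fun z' _ => hneutral z']
  rw [show Ω1.filter (fun ω => g (f0 ω) = z)
        = (Finset.univ.filter (fun z' => g z' = z)).biUnion
            (fun z' => Ω1.filter (fun ω => f0 ω = z')) from ?_,
      Finset.sum_biUnion ?_]
  · intro a' _ b' _ hab
    rw [Function.onFun, Finset.disjoint_left]
    intro ω hω hω'
    simp only [Finset.mem_filter] at hω hω'
    exact hab (hω.2 ▸ hω'.2 ▸ rfl)
  · ext ω
    simp only [Finset.mem_filter, Finset.mem_biUnion, Finset.mem_univ, true_and]
    constructor
    · rintro ⟨h1, h2⟩; exact ⟨f0 ω, h2, h1, rfl⟩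
    · rintro ⟨z', hz', h1, rfl⟩; exact ⟨h1, hz'⟩

lemma baseline_eq {Ω Z : Type*} [Fintype Ω] [Fintype Z] (π : Ω → ℝ) (f0 : Ω → Z)
    {M : ℕ} (Ωc : Fin M → Finset Ω)
    (hdisj : ∀ c d : Fin M, c ≠ d → Disjoint (Ωc c) (Ωc d))
    (α : Fin M → ℝ)
    (hneutral : ∀ (c : Fin M) (z : Z),
      α c * pushf f0 π z = ∑ ω ∈ (Ωc c).filter (fun ω => f0 ω = z), π ω) (z : Z) :
    (1 - ∑ c, α c) * pushf f0 π z
      = ∑ ω ∈ Finset.univ.filter (fun ω => (∀ c, ω ∉ Ωc c) ∧ f0 ω = z), π ω := by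
  have hsplit : pushf f0 π z
      = (∑ c, ∑ ω ∈ (Ωc c).filter (fun ω => f0 ω = z), π ω)
        + ∑ ω ∈ Finset.univ.filter (fun ω => (∀ c, ω ∉ Ωc c) ∧ f0 ω = z), π ω := by
    rw [show pushf f0 π z = ∑ ω ∈ Finset.univ.filter (fun ω => f0 ω = z), π ω from rfl]
    rw [← Finset.sum_filter_add_sum_filter_not (Finset.univ.filter (fun ω => f0 ω = z))
      (fun ω => ∃ c, ω ∈ Ωc c) π]
    congr 1
    · rw [show (Finset.univ.filter (fun ω => f0 ω = z)).filter (fun ω => ∃ c, ω ∈ Ωc c)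
            = Finset.univ.biUnion (fun c => (Ωc c).filter (fun ω => f0 ω = z)) from ?_,
          Finset.sum_biUnion ?_]
      · intro a _ b _ hab
        rw [Function.onFun, Finset.disjoint_left]
        intro ω hω hω'
        simp only [Finset.mem_filter] at hω hω'
        exact Finset.disjoint_left.1 (hdisj a b hab) hω.1 hω'.1
      · ext ω
        simp only [Finset.mem_filter, Finset.mem_biUnion, Finset.mem_univ, true_and]
        tauto
    · congr 1
      ext ω
      simp only [Finset.mem_filter, Finset.mem_univ, true_and, not_exists]
      tauto
  have h2 : ∀ c, α c * pushf f0 π z = ∑ ω ∈ (Ωc c).filter (fun ω => f0 ω = z), π ω :=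
    fun c => hneutral c z
  rw [sub_mul, one_mul, Finset.sum_mul, Finset.sum_congr rfl fun c _ => h2 c]
  linarith [hsplit]

lemma filter_inst_congr {α : Type*} {p : α → Prop} {h1 h2 : DecidablePred p} {s : Finset α} :
    @Finset.filter α p h1 s = @Finset.filter α p h2 s := by
  rw [Subsingleton.elim h1 h2]

/-- with `M` disjoint collectives `Ω_c ⊆ Ω` of masses `α_c > 0`
satisfying the neutrality assumption, strategies `h_c`, and individuals `S₁, S₂, …`
drawn i.i.d. from `π`, the post-edit empirical mixture
`P̂_N = α_{N,0} P̂_{N,0} + Σ_{c : α_{N,c} > 0} α_{N,c} P̂_{N,c}` converges pointwise,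
almost surely, to `P = (1 − ᾱ) P₀ + Σ_c α_c P_c` with `P₀ = (f₀)_#π` and
`P_c = (h_c)_# P₀`; moreover `α_{N,c} → α_c` and `P̂_{N,c} → P_c` almost surely. -/
theorem stmt_0 {X Y Ω : Type*} [Fintype X] [Fintype Y] [Nonempty X] [Nonempty Y]
    [Fintype Ω] [Nonempty Ω]
    (π : Ω → ℝ) (hπnn : ∀ ω, 0 ≤ π ω) (hπsum : ∑ ω, π ω = 1)
    (f0 : Ω → X × Y)
    (M : ℕ) (hM : 1 ≤ M)
    (Ωc : Fin M → Finset Ω)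
    (hdisj : ∀ c d : Fin M, c ≠ d → Disjoint (Ωc c) (Ωc d))
    (α : Fin M → ℝ) (hα : ∀ c, α c = ∑ ω ∈ Ωc c, π ω) (hαpos : ∀ c, 0 < α c)
    (hneutral : ∀ (c : Fin M) (z : X × Y),
      α c * pushf f0 π z = ∑ ω ∈ (Ωc c).filter (fun ω => f0 ω = z), π ω)
    (h : Fin M → X × Y → X × Y)
    (Pdef : X × Y → ℝ) (hPdefnn : ∀ z, 0 ≤ Pdef z) (hPdefsum : ∑ z, Pdef z = 1)
    {Θ : Type*} [MeasurableSpace Θ] (μ : Measure Θ) [IsProbabilityMeasure μ]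
    (S : ℕ → Θ → Ω)
    (hindep : iIndepFun (m := fun _ : ℕ => (⊤ : MeasurableSpace Ω)) S μ)
    (hlaw : ∀ (i : ℕ) (w : Ω), μ {θ | S i θ = w} = ENNReal.ofReal (π w)) :
    ∀ᵐ θ ∂μ,
      (∀ z : X × Y,
        Tendsto
          (fun N : ℕ =>
            (1 - ∑ c, (sampCount S (· ∈ Ωc c) N θ : ℝ) / N) *
              (if N - ∑ c, sampCount S (· ∈ Ωc c) N θ = 0 then Pdef z
               else (((Finset.range N).filter fun i =>
                        (∀ c, S i θ ∉ Ωc c) ∧ f0 (S i θ) = z).card : ℝ)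
                      / (N - ∑ c, sampCount S (· ∈ Ωc c) N θ : ℕ))
            + ∑ c ∈ Finset.univ.filter (fun c => 0 < sampCount S (· ∈ Ωc c) N θ),
                ((sampCount S (· ∈ Ωc c) N θ : ℝ) / N) *
                  sampEmp S (· ∈ Ωc c) (fun ω => h c (f0 ω)) N θ z)
          atTop
          (nhds ((1 - ∑ c, α c) * pushf f0 π z
            + ∑ c, α c * pushf (h c) (pushf f0 π) z))) ∧
      ∀ c : Fin M,
        Tendsto (fun N : ℕ => (sampCount S (· ∈ Ωc c) N θ : ℝ) / N) atTop (nhds (α c)) ∧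
        ∀ z : X × Y,
          Tendsto (fun N : ℕ => sampEmp S (· ∈ Ωc c) (fun ω => h c (f0 ω)) N θ z)
            atTop (nhds (pushf (h c) (pushf f0 π) z)) := by
  -- limit identities
  have hneutralC : ∀ (c : Fin M) (z' : X × Y),
      α c * pushf f0 π z'
        = ∑ ω ∈ @Finset.filter Ω (fun ω => f0 ω = z')
            (fun ω => Classical.propDecidable (f0 ω = z')) (Ωc c), π ω := by
    intro c z'
    exact (hneutral c z').trans (Finset.sum_congr filter_inst_congr fun _ _ => rfl)
  -- a.e. convergence events
  have E1 : ∀ᵐ θ ∂μ, ∀ c : Fin M,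
      Tendsto (fun N : ℕ => (sampCount S (· ∈ Ωc c) N θ : ℝ) / N) atTop (nhds (α c)) := by
    rw [ae_all_iff]
    intro c
    have h0 := freq μ π hπnn hπsum S hindep hlaw (· ∈ Ωc c)
    convert h0 using 3
    refine congrArg nhds ?_
    rw [hα c]
    refine Finset.sum_congr ?_ fun _ _ => rfl
    ext ω; simp
  have E2 : ∀ᵐ θ ∂μ, ∀ (c : Fin M) (z : X × Y),
      Tendsto (fun N : ℕ =>
          (sampCount S (fun ω => ω ∈ Ωc c ∧ h c (f0 ω) = z) N θ : ℝ) / N) atTop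
        (nhds (α c * pushf (h c) (pushf f0 π) z)) := by
    rw [ae_all_iff]
    intro c
    rw [ae_all_iff]
    intro z
    have h0 := freq μ π hπnn hπsum S hindep hlaw (fun ω => ω ∈ Ωc c ∧ h c (f0 ω) = z)
    convert h0 using 3
    refine congrArg nhds ?_
    refine (pushf_comp_eq π f0 (h c) (Ωc c) (α c) (hneutralC c) z).trans ?_
    refine Finset.sum_congr ?_ fun _ _ => rfl
    ext ω; simp
  have E3 : ∀ᵐ θ ∂μ, ∀ z : X × Y,
      Tendsto (fun N : ℕ =>
          (sampCount S (fun ω => (∀ c, ω ∉ Ωc c) ∧ f0 ω = z) N θ : ℝ) / N) atTop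
        (nhds ((1 - ∑ c, α c) * pushf f0 π z)) := by
    rw [ae_all_iff]
    intro z
    have h0 := freq μ π hπnn hπsum S hindep hlaw (fun ω => (∀ c, ω ∉ Ωc c) ∧ f0 ω = z)
    convert h0 using 3
    refine congrArg nhds ?_
    refine (baseline_eq π f0 Ωc hdisj α hneutralC z).trans ?_
    refine Finset.sum_congr filter_inst_congr fun _ _ => rfl
  filter_upwards [E1, E2, E3] with θ hT1 hT2 hT3
  -- per-collective empirical identity
  have hcqle : ∀ (c : Fin M) (z : X × Y) (N : ℕ),
      sampCount S (fun ω => ω ∈ Ωc c ∧ h c (f0 ω) = z) N θ ≤ sampCount S (· ∈ Ωc c) N θ :=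
    fun c z N => sampCount_mono S (fun ω hω => hω.1) N θ
  have hempId : ∀ (c : Fin M) (z : X × Y) (N : ℕ),
      sampEmp S (· ∈ Ωc c) (fun ω => h c (f0 ω)) N θ z
        = ((sampCount S (fun ω => ω ∈ Ωc c ∧ h c (f0 ω) = z) N θ : ℝ) / N)
            / ((sampCount S (· ∈ Ωc c) N θ : ℝ) / N) := by
    intro c z N
    have hkey : sampEmp S (· ∈ Ωc c) (fun ω => h c (f0 ω)) N θ z
        = (sampCount S (fun ω => ω ∈ Ωc c ∧ h c (f0 ω) = z) N θ : ℝ)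
            / (sampCount S (· ∈ Ωc c) N θ : ℝ) := by
      simp only [sampEmp, sampCount, Finset.filter_congr_decidable]
    rw [hkey]
    rcases eq_or_ne (sampCount S (· ∈ Ωc c) N θ) 0 with hnc | hnc
    · have hcq0 : sampCount S (fun ω => ω ∈ Ωc c ∧ h c (f0 ω) = z) N θ = 0 :=
        Nat.le_zero.1 (hnc ▸ hcqle c z N)
      simp [hnc, hcq0]
    · have hN0 : (N : ℝ) ≠ 0 := by
        have := (hcqle c z N).trans (sampCount_le S (· ∈ Ωc c) N θ)
        have h1 : 0 < N := lt_of_lt_of_le (Nat.pos_of_ne_zero hnc) (sampCount_le S _ N θ)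
        exact_mod_cast h1.ne'
      have hncR : ((sampCount S (· ∈ Ωc c) N θ : ℝ)) ≠ 0 := by exact_mod_cast hnc
      field_simp
  refine ⟨?_, ?_⟩
  · -- main mixture convergence
    intro z
    have hlim : Tendsto (fun N : ℕ =>
        (sampCount S (fun ω => (∀ c, ω ∉ Ωc c) ∧ f0 ω = z) N θ : ℝ) / N
          + ∑ c, (sampCount S (fun ω => ω ∈ Ωc c ∧ h c (f0 ω) = z) N θ : ℝ) / N) atTop
        (nhds ((1 - ∑ c, α c) * pushf f0 π z
          + ∑ c, α c * pushf (h c) (pushf f0 π) z)) :=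
      (hT3 z).add (tendsto_finset_sum _ fun c _ => hT2 c z)
    refine Tendsto.congr' ?_ hlim
    filter_upwards [eventually_ge_atTop 1] with N hN
    have hN0 : (N : ℝ) ≠ 0 := by positivity
    set nc : Fin M → ℕ := fun c => sampCount S (· ∈ Ωc c) N θ with hnc
    set T : ℕ := ∑ c, nc c with hT
    have hTcount : T = sampCount S (fun ω => ∃ c, ω ∈ Ωc c) N θ :=
      count_disjoint_sum S Ωc hdisj N θ
    have hTN : T ≤ N := hTcount ▸ sampCount_le S _ N θ
    have hNot : sampCount S (fun ω => ¬ ∃ c, ω ∈ Ωc c) N θ = N - T := by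
      have := sampCount_add_not S (fun ω => ∃ c, ω ∈ Ωc c) N θ
      omega
    set cr : ℕ := sampCount S (fun ω => (∀ c, ω ∉ Ωc c) ∧ f0 ω = z) N θ with hcr
    have hcrle : cr ≤ N - T := by
      rw [← hNot]
      exact sampCount_mono S (fun ω hω hex => hex.elim (fun c hc => hω.1 c hc)) N θ
    have hcrcard : (((Finset.range N).filter fun i =>
        (∀ c, S i θ ∉ Ωc c) ∧ f0 (S i θ) = z).card : ℕ) = cr := by
      simp only [hcr, sampCount, Finset.filter_congr_decidable]
    have hfrac : (1 - ∑ c, (nc c : ℝ) / N) = ((N - T : ℕ) : ℝ) / N := by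
      have hsum : (∑ c, (nc c : ℝ)) = (T : ℝ) := by rw [hT]; push_cast; ring
      rw [← Finset.sum_div, hsum, Nat.cast_sub hTN, sub_div, div_self hN0]
    -- first term
    have hfirst : (1 - ∑ c, (nc c : ℝ) / N) *
        (if N - T = 0 then Pdef z
         else (((Finset.range N).filter fun i =>
                  (∀ c, S i θ ∉ Ωc c) ∧ f0 (S i θ) = z).card : ℝ) / ((N - T : ℕ) : ℝ))
        = (cr : ℝ) / N := by
      by_cases h0 : N - T = 0
      · have hcr0 : cr = 0 := by omega
        rw [if_pos h0, hfrac, h0]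
        simp [hcr0]
      · rw [if_neg h0, hfrac]
        have : (((Finset.range N).filter fun i =>
            (∀ c, S i θ ∉ Ωc c) ∧ f0 (S i θ) = z).card : ℝ) = (cr : ℝ) := by
          exact_mod_cast congrArg (Nat.cast (R := ℝ)) hcrcard
        rw [this]
        have hNT0 : ((N - T : ℕ) : ℝ) ≠ 0 := by
          exact_mod_cast h0
        rw [div_mul_div_comm, mul_comm (((N - T : ℕ) : ℕ) : ℝ) (cr : ℝ),
          mul_comm (N : ℝ) (((N - T : ℕ) : ℕ) : ℝ)]
        rw [mul_comm (((N - T : ℕ) : ℕ) : ℝ) (N : ℝ)]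
        exact mul_div_mul_right _ _ hNT0
    -- second term
    have hsecond : ∑ c ∈ Finset.univ.filter (fun c => 0 < nc c),
        ((nc c : ℝ) / N) * sampEmp S (· ∈ Ωc c) (fun ω => h c (f0 ω)) N θ z
        = ∑ c, (sampCount S (fun ω => ω ∈ Ωc c ∧ h c (f0 ω) = z) N θ : ℝ) / N := by
      rw [← Finset.sum_filter_add_sum_filter_not Finset.univ (fun c => 0 < nc c)
        (fun c => (sampCount S (fun ω => ω ∈ Ωc c ∧ h c (f0 ω) = z) N θ : ℝ) / N)]
      have hzero : ∑ c ∈ Finset.univ.filter (fun c => ¬ 0 < nc c),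
          (sampCount S (fun ω => ω ∈ Ωc c ∧ h c (f0 ω) = z) N θ : ℝ) / N = 0 := by
        refine Finset.sum_eq_zero fun c hc => ?_
        simp only [Finset.mem_filter, not_lt, Nat.le_zero] at hc
        have : sampCount S (fun ω => ω ∈ Ωc c ∧ h c (f0 ω) = z) N θ = 0 :=
          Nat.le_zero.1 (hc.2 ▸ hcqle c z N)
        simp [this]
      rw [hzero, add_zero]
      refine Finset.sum_congr rfl fun c hc => ?_
      simp only [Finset.mem_filter] at hc
      have hnc0 : (nc c : ℝ) ≠ 0 := by
        exact_mod_cast hc.2.ne'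
      rw [hempId c z N, mul_comm, div_mul_cancel₀ _ (div_ne_zero hnc0 hN0)]
    rw [hfirst, hsecond]
  · intro c
    refine ⟨hT1 c, fun z => ?_⟩
    have hdiv := (hT2 c z).div (hT1 c) (ne_of_gt (hαpos c))
    rw [show α c * pushf (h c) (pushf f0 π) z / α c = pushf (h c) (pushf f0 π) z from
      mul_div_cancel_left₀ _ (ne_of_gt (hαpos c))] at hdiv
    exact hdiv.congr fun N => (hempId c z N).symm
end

section
/- Let P̂ be a probability distribution on 𝒵, let 0 ≤ ε < 1, and let m̂ : 𝒳 → 𝒴 be ε-contamination-suboptimal on a subset 𝒳′ ⊆ 𝒳 under P̂. If x* ∈ 𝒳′, y* ∈ 𝒴, and P̂(x*, y*) > P̂(x*, y′) + ε/(1 − ε) for every y′ ∈ 𝒴 with y′ ≠ y*, then m̂(x*) = y*. -/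
open Finset
open scoped Classical

/-- A classifier `m` is `ε`-contamination-suboptimal on `X'` under the
probability mass function `P` on `X × Y`: there is a contamination distribution `R`
such that, with `Q = (1-ε)•P + ε•R`, for every `x ∈ X'` with positive feature marginal
under `Q`, `m x` maximizes `y ↦ Q (x, y)`. -/
def ContamSuboptimal {X Y : Type*} [Fintype X] [Fintype Y]
    (ε : ℝ) (P : X × Y → ℝ) (X' : Set X) (m : X → Y) : Prop :=
  ∃ R : X × Y → ℝ, (∀ z, 0 ≤ R z) ∧ (∑ z, R z = 1) ∧
    ∀ x ∈ X', 0 < ∑ y, ((1 - ε) * P (x, y) + ε * R (x, y)) →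
      ∀ y, (1 - ε) * P (x, y) + ε * R (x, y) ≤ (1 - ε) * P (x, m x) + ε * R (x, m x)

/-- margin implication for planting: if `m̂` is
`ε`-contamination-suboptimal on `𝒳′` under `P̂`, `x* ∈ 𝒳′`, and
`P̂(x*, y*) > P̂(x*, y′) + ε/(1-ε)` for all `y′ ≠ y*`, then `m̂(x*) = y*`. -/
theorem stmt_1 {X Y : Type*} [Fintype X] [Fintype Y] [Nonempty X] [Nonempty Y]
    (P : X × Y → ℝ) (hPnn : ∀ z, 0 ≤ P z) (hPsum : ∑ z, P z = 1)
    (ε : ℝ) (hε0 : 0 ≤ ε) (hε1 : ε < 1)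
    (X' : Set X) (mhat : X → Y) (hm : ContamSuboptimal ε P X' mhat)
    (xstar : X) (hx : xstar ∈ X') (ystar : Y)
    (hmargin : ∀ y' : Y, y' ≠ ystar → P (xstar, y') + ε / (1 - ε) < P (xstar, ystar)) :
    mhat xstar = ystar := by
  by_contra hne
  obtain ⟨R, hRnn, hRsum, hopt⟩ := hm
  have h1ε : (0:ℝ) < 1 - ε := by linarith
  set y' := mhat xstar with hy'
  have hmar := hmargin y' hne
  have hPystar : 0 < P (xstar, ystar) := by
    have := hPnn (xstar, y')
    have : 0 ≤ ε / (1 - ε) := div_nonneg hε0 h1ε.le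
    linarith [hPnn (xstar, y')]
  have hQnn : ∀ y : Y, 0 ≤ (1 - ε) * P (xstar, y) + ε * R (xstar, y) := fun y =>
    add_nonneg (mul_nonneg h1ε.le (hPnn _)) (mul_nonneg hε0 (hRnn _))
  have hpos : 0 < ∑ y, ((1 - ε) * P (xstar, y) + ε * R (xstar, y)) := by
    have hterm : 0 < (1 - ε) * P (xstar, ystar) + ε * R (xstar, ystar) := by
      have := mul_nonneg hε0 (hRnn (xstar, ystar))
      nlinarith
    calc (0:ℝ) < (1 - ε) * P (xstar, ystar) + ε * R (xstar, ystar) := hterm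
      _ ≤ _ := Finset.single_le_sum (fun y _ => hQnn y) (Finset.mem_univ ystar)
  have hle := hopt xstar hx hpos ystar
  have hR1 : R (xstar, y') ≤ 1 := by
    calc R (xstar, y') ≤ ∑ z, R z :=
      Finset.single_le_sum (fun z _ => hRnn z) (Finset.mem_univ (xstar, y'))
      _ = 1 := hRsum
  -- Q(ystar) ≥ (1-ε)P(ystar) > (1-ε)P(y') + ε ≥ Q(y')
  have key : (1 - ε) * P (xstar, y') + ε * R (xstar, y') < (1 - ε) * P (xstar, ystar) + ε * R (xstar, ystar) := by
    have h1 : (1 - ε) * (P (xstar, y') + ε / (1 - ε)) < (1 - ε) * P (xstar, ystar) :=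
      (mul_lt_mul_iff_right₀ h1ε).2 hmar
    have h2 : (1 - ε) * (P (xstar, y') + ε / (1 - ε)) = (1 - ε) * P (xstar, y') + ε := by
      field_simp
    have h3 : ε * R (xstar, y') ≤ ε := by nlinarith [hRnn (xstar, y')]
    have h4 := mul_nonneg hε0 (hRnn (xstar, ystar))
    linarith
  exact absurd hle (not_le.2 key)
end

section
/- Let P̂ be a probability distribution on 𝒵, let 0 ≤ ε < 1, and let m̂ : 𝒳 → 𝒴 be ε-contamination-suboptimal on a subset 𝒳′ ⊆ 𝒳 under P̂. If x* ∈ 𝒳′, y* ∈ 𝒴, and there exists y′ ∈ 𝒴 with y′ ≠ y* such that P̂(x*, y′) > P̂(x*, y*) + ε/(1 − ε), then m̂(x*) ≠ y*. -/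
open Finset
open scoped Classical

/-- margin implication for unplanting: if `m̂` is
`ε`-contamination-suboptimal on `𝒳′` under `P̂`, `x* ∈ 𝒳′`, and there is `y′ ≠ y*` with
`P̂(x*, y′) > P̂(x*, y*) + ε/(1-ε)`, then `m̂(x*) ≠ y*`. -/
theorem stmt_2 {X Y : Type*} [Fintype X] [Fintype Y] [Nonempty X] [Nonempty Y]
    (P : X × Y → ℝ) (hPnn : ∀ z, 0 ≤ P z) (hPsum : ∑ z, P z = 1)
    (ε : ℝ) (hε0 : 0 ≤ ε) (hε1 : ε < 1)
    (X' : Set X) (mhat : X → Y) (hm : ContamSuboptimal ε P X' mhat)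
    (xstar : X) (hx : xstar ∈ X') (ystar : Y)
    (hmargin : ∃ y' : Y, y' ≠ ystar ∧ P (xstar, ystar) + ε / (1 - ε) < P (xstar, y')) :
    mhat xstar ≠ ystar := by
  obtain ⟨R, hRnn, hRsum, hopt⟩ := hm
  obtain ⟨y', hy'ne, hy'⟩ := hmargin
  have h1ε : (0:ℝ) < 1 - ε := by linarith
  have hεdiv : 0 ≤ ε / (1 - ε) := div_nonneg hε0 h1ε.le
  have hPy' : 0 < P (xstar, y') := lt_of_le_of_lt (by have := hPnn (xstar, ystar); linarith) hy'
  have hQy' : 0 < (1 - ε) * P (xstar, y') + ε * R (xstar, y') := by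
    have := hRnn (xstar, y')
    nlinarith
  have hpos : 0 < ∑ y, ((1 - ε) * P (xstar, y) + ε * R (xstar, y)) := by
    refine Finset.sum_pos' (fun y _ => ?_) ⟨y', Finset.mem_univ _, hQy'⟩
    have := hRnn (xstar, y); have := hPnn (xstar, y); nlinarith
  intro heq
  have hle := hopt xstar hx hpos y'
  rw [heq] at hle
  have hR1 : R (xstar, ystar) ≤ 1 := by
    rw [← hRsum]
    exact Finset.single_le_sum (fun z _ => hRnn z) (Finset.mem_univ _)
  have hRy' := hRnn (xstar, y')
  have hε' : ε / (1 - ε) * (1 - ε) = ε := div_mul_cancel₀ _ h1ε.ne'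
  have hkey : P (xstar, y') ≤ P (xstar, ystar) + ε / (1 - ε) := by nlinarith
  linarith
end

section
/- Let P̂₀, P̂₁, …, P̂_M be probability distributions on 𝒵, let α₀, α₁, …, α_M ≥ 0 with Σ_{d=0}^M α_d = 1, and set P̂ = Σ_{d=0}^M α_d P̂_d. Fix c ∈ {1,…,M}, a subset 𝒳′ ⊆ 𝒳, x* ∈ 𝒳′, and y* ∈ 𝒴, and assume P̂_c(x*, y′) = 0 for every y′ ≠ y*. Define the exact margin M_c(x*) = α_c P̂_c^X(x*) − Σ_{d ∈ {1,…,M}, d ≠ c} α_d max_{y′ ≠ y*}(P̂_d(x*, y′) − P̂_d(x*, y*)) − α₀ max_{y′ ≠ y*}(P̂₀(x*, y′) − P̂₀(x*, y*)). Let 0 ≤ ε < 1 and let m̂ : 𝒳 → 𝒴 be ε-contamination-suboptimal on 𝒳′ under P̂. If M_c(x*) > ε/(1 − ε), then m̂(x*) = y*. -/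
open Finset
open scoped Classical

/-- Feature marginal of a probability mass function on `X × Y`. -/
noncomputable def margX {X Y : Type*} [Fintype X] [Fintype Y] (P : X × Y → ℝ) : X → ℝ :=
  fun x => ∑ y, P (x, y)

/-- `maxOver ystar f` is the maximum of `f y'` over `y' ≠ ystar`
(a supremum over the nonempty finite type `{y // y ≠ ystar}` when `2 ≤ |Y|`). -/
noncomputable def maxOver {Y : Type*} [Fintype Y] (ystar : Y) (f : Y → ℝ) : ℝ :=
  ⨆ y' : {y : Y // y ≠ ystar}, f y'

lemma maxOver_ge {Y : Type*} [Fintype Y] {ystar y : Y} (h : y ≠ ystar) (f : Y → ℝ) :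
    f y ≤ maxOver ystar f := by
  have := le_ciSup (f := fun y' : {y : Y // y ≠ ystar} => f y')
    (Set.Finite.bddAbove (Set.finite_range _)) ⟨y, h⟩
  simpa [maxOver] using this

/-- if the exact empirical margin of collective `c` at `x* ∈ 𝒳′`
exceeds `ε/(1−ε)` and `m̂` is `ε`-contamination-suboptimal on `𝒳′` under the mixture
`P̂ = Σ_d α_d P̂_d`, then `m̂(x*) = y*`. -/
theorem stmt_6 {X Y : Type*} [Fintype X] [Fintype Y] [Nonempty X]
    (hY : 2 ≤ Fintype.card Y)
    (M : ℕ) (hM : 1 ≤ M)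
    (P : Fin (M + 1) → X × Y → ℝ)
    (hPnn : ∀ d z, 0 ≤ P d z) (hPsum : ∀ d, ∑ z, P d z = 1)
    (α : Fin (M + 1) → ℝ) (hα : ∀ d, 0 ≤ α d) (hαsum : ∑ d, α d = 1)
    (c : Fin (M + 1)) (hc : c ≠ 0)
    (X' : Set X) (xstar : X) (hx : xstar ∈ X') (ystar : Y)
    (hplant : ∀ y' : Y, y' ≠ ystar → P c (xstar, y') = 0)
    (ε : ℝ) (hε0 : 0 ≤ ε) (hε1 : ε < 1)
    (mhat : X → Y)
    (hm : ContamSuboptimal ε (fun z => ∑ d, α d * P d z) X' mhat)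
    (hmargin :
      ε / (1 - ε) <
        α c * margX (P c) xstar
          - (∑ d ∈ (Finset.univ.erase 0).erase c,
              α d * maxOver ystar (fun y'' => P d (xstar, y'') - P d (xstar, ystar)))
          - α 0 * maxOver ystar (fun y'' => P 0 (xstar, y'') - P 0 (xstar, ystar))) :
    mhat xstar = ystar := by
  obtain ⟨yy, hyy⟩ := Fintype.exists_ne_of_one_lt_card (by omega) ystar
  haveI hne' : Nonempty {y : Y // y ≠ ystar} := ⟨⟨yy, hyy⟩⟩
  obtain ⟨R, hR0, hRsum, hopt⟩ := hm
  have h1ε : (0:ℝ) < 1 - ε := by linarith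
  have hεnn : 0 ≤ ε / (1 - ε) := div_nonneg hε0 h1ε.le
  have hQnn : ∀ y, 0 ≤ (1 - ε) * (∑ d, α d * P d (xstar, y)) + ε * R (xstar, y) := by
    intro y
    have h1 : 0 ≤ ∑ d, α d * P d (xstar, y) :=
      Finset.sum_nonneg fun d _ => mul_nonneg (hα d) (hPnn d _)
    exact add_nonneg (mul_nonneg h1ε.le h1) (mul_nonneg hε0 (hR0 _))
  -- positivity of Q^X(xstar)
  have hQpos : 0 < ∑ y, ((1 - ε) * (∑ d, α d * P d (xstar, y)) + ε * R (xstar, y)) := by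
    by_contra hle
    push_neg at hle
    have hsum0 : ∑ y, ((1 - ε) * (∑ d, α d * P d (xstar, y)) + ε * R (xstar, y)) = 0 :=
      le_antisymm hle (Finset.sum_nonneg fun y _ => hQnn y)
    have hterm0 : ∀ y : Y, (1 - ε) * (∑ d, α d * P d (xstar, y)) + ε * R (xstar, y) = 0 :=
      fun y => (Finset.sum_eq_zero_iff_of_nonneg (fun y _ => hQnn y)).1 hsum0 y (mem_univ y)
    have hzero : ∀ (d : Fin (M+1)) (y : Y), α d * P d (xstar, y) = 0 := by
      intro d y
      have h1 : 0 ≤ ∑ d, α d * P d (xstar, y) :=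
        Finset.sum_nonneg fun d _ => mul_nonneg (hα d) (hPnn d _)
      have h2 : (1 - ε) * (∑ d, α d * P d (xstar, y)) = 0 := by
        have := hterm0 y
        nlinarith [mul_nonneg hε0 (hR0 (xstar, y)), mul_nonneg h1ε.le h1]
      have h3 : ∑ d, α d * P d (xstar, y) = 0 := by
        rcases mul_eq_zero.1 h2 with h | h
        · linarith
        · exact h
      exact (Finset.sum_eq_zero_iff_of_nonneg
        (fun d _ => mul_nonneg (hα d) (hPnn d _))).1 h3 d (mem_univ d)
    have hmaxz : ∀ d : Fin (M+1),
        α d * maxOver ystar (fun y'' => P d (xstar, y'') - P d (xstar, ystar)) = 0 := by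
      intro d
      rcases eq_or_lt_of_le (hα d) with h | h
      · rw [← h, zero_mul]
      · have hP0 : ∀ y, P d (xstar, y) = 0 := by
          intro y
          have := hzero d y
          rcases mul_eq_zero.1 this with h' | h'
          · exact absurd h' (ne_of_gt h)
          · exact h'
        have : maxOver ystar (fun y'' => P d (xstar, y'') - P d (xstar, ystar)) = 0 := by
          unfold maxOver
          simp [hP0]
        rw [this, mul_zero]
    have hmc : α c * margX (P c) xstar = 0 := by
      unfold margX
      rw [Finset.mul_sum]
      exact Finset.sum_eq_zero fun y _ => hzero c y
    have hS : (∑ d ∈ (Finset.univ.erase 0).erase c,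
        α d * maxOver ystar (fun y'' => P d (xstar, y'') - P d (xstar, ystar))) = 0 :=
      Finset.sum_eq_zero fun d _ => hmaxz d
    rw [hmc, hS, hmaxz 0] at hmargin
    linarith
  by_contra hneq
  set yb := mhat xstar with hyb
  have key := hopt xstar hx hQpos ystar
  simp only at key
  -- marginal of P c at xstar is concentrated at ystar
  have hmarg_c : margX (P c) xstar = P c (xstar, ystar) := by
    unfold margX
    exact Finset.sum_eq_single ystar (fun y _ hy => hplant y hy)
      (fun h => absurd (mem_univ ystar) h)
  have hybne : yb ≠ ystar := hneq
  -- sum split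
  set f : Fin (M+1) → ℝ := fun d => α d * (P d (xstar, ystar) - P d (xstar, yb)) with hf
  have hc_mem : c ∈ Finset.univ.erase (0 : Fin (M+1)) := Finset.mem_erase.2 ⟨hc, mem_univ c⟩
  have hsplit : ∑ d, f d = f 0 + (f c + ∑ d ∈ (Finset.univ.erase 0).erase c, f d) := by
    rw [Finset.add_sum_erase _ f hc_mem, Finset.add_sum_erase _ f (mem_univ 0)]
  have hfc : f c = α c * margX (P c) xstar := by
    simp only [hf, hmarg_c, hplant yb hybne, sub_zero]
  have hfd : ∀ d : Fin (M+1), d ≠ c →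
      -(α d * maxOver ystar (fun y'' => P d (xstar, y'') - P d (xstar, ystar))) ≤ f d := by
    intro d _
    have h1 : P d (xstar, yb) - P d (xstar, ystar) ≤
        maxOver ystar (fun y'' => P d (xstar, y'') - P d (xstar, ystar)) :=
      maxOver_ge hybne (fun y'' => P d (xstar, y'') - P d (xstar, ystar))
    have := mul_le_mul_of_nonneg_left h1 (hα d)
    simp only [hf]
    nlinarith
  have hsumf : ε / (1 - ε) < ∑ d, f d := by
    rw [hsplit]
    have h0 := hfd 0 (fun h => hc h.symm)
    have hS : -(∑ d ∈ (Finset.univ.erase 0).erase c,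
        α d * maxOver ystar (fun y'' => P d (xstar, y'') - P d (xstar, ystar)))
        ≤ ∑ d ∈ (Finset.univ.erase 0).erase c, f d := by
      rw [← Finset.sum_neg_distrib]
      exact Finset.sum_le_sum fun d hd => hfd d (Finset.ne_of_mem_erase hd)
    rw [hfc] at *
    linarith [hfd 0 (fun h => hc h.symm), hS, hmargin]
  -- from key
  have hRyb : R (xstar, yb) ≤ 1 := by
    rw [← hRsum]
    exact Finset.single_le_sum (fun z _ => hR0 z) (mem_univ (xstar, yb))
  have hdiff : (1 - ε) * (∑ d, f d) ≤ ε := by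
    have hsub : ∑ d, f d =
        (∑ d, α d * P d (xstar, ystar)) - ∑ d, α d * P d (xstar, yb) := by
      rw [← Finset.sum_sub_distrib]
      exact Finset.sum_congr rfl fun d _ => by ring
    rw [hsub]
    have hRst : 0 ≤ R (xstar, ystar) := hR0 _
    nlinarith [key]
  have : (1 - ε) * (ε / (1 - ε)) < (1 - ε) * (∑ d, f d) :=
    mul_lt_mul_of_pos_left hsumf h1ε
  rw [mul_div_cancel₀ _ (ne_of_gt h1ε)] at this
  linarith
end

section
/- Let P̂₀, P̂₁, …, P̂_M be probability distributions on 𝒵, let α₀, α₁, …, α_M ≥ 0 with Σ_{d=0}^M α_d = 1, and set P̂ = Σ_{d=0}^M α_d P̂_d. Fix c ∈ {1,…,M}, a subset 𝒳′ ⊆ 𝒳, x* ∈ 𝒳′, y* ∈ 𝒴, and a label y′ ∈ 𝒴 with y′ ≠ y*, and assume P̂_c(x*, y) = 0 for every y ≠ y′. Define the exact unplanting margin M_c^{unp}(x*) = α_c P̂_c^X(x*) − Σ_{d ∈ {1,…,M}, d ≠ c} α_d (P̂_d(x*, y*) − P̂_d(x*, y′)) − α₀ (P̂₀(x*, y*)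 − P̂₀(x*, y′)). Let 0 ≤ ε < 1 and let m̂ : 𝒳 → 𝒴 be ε-contamination-suboptimal on 𝒳′ under P̂. If M_c^{unp}(x*) > ε/(1 − ε), then m̂(x*) ≠ y*. -/
open Finset
open scoped Classical

/-- if the exact unplanting margin of collective `c` at `x* ∈ 𝒳′`
exceeds `ε/(1−ε)` and `m̂` is `ε`-contamination-suboptimal on `𝒳′` under the mixture
`P̂ = Σ_d α_d P̂_d`, then `m̂(x*) ≠ y*`. -/
theorem stmt_12 {X Y : Type*} [Fintype X] [Fintype Y] [Nonempty X]
    (hY : 2 ≤ Fintype.card Y)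
    (M : ℕ) (hM : 1 ≤ M)
    (P : Fin (M + 1) → X × Y → ℝ)
    (hPnn : ∀ d z, 0 ≤ P d z) (hPsum : ∀ d, ∑ z, P d z = 1)
    (α : Fin (M + 1) → ℝ) (hα : ∀ d, 0 ≤ α d) (hαsum : ∑ d, α d = 1)
    (c : Fin (M + 1)) (hc : c ≠ 0)
    (X' : Set X) (xstar : X) (hx : xstar ∈ X') (ystar : Y)
    (y' : Y) (hy' : y' ≠ ystar)
    (hconc : ∀ y : Y, y ≠ y' → P c (xstar, y) = 0)
    (ε : ℝ) (hε0 : 0 ≤ ε) (hε1 : ε < 1)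
    (mhat : X → Y)
    (hm : ContamSuboptimal ε (fun z => ∑ d, α d * P d z) X' mhat)
    (hmargin :
      ε / (1 - ε) <
        α c * margX (P c) xstar
          - (∑ d ∈ (Finset.univ.erase 0).erase c,
              α d * (P d (xstar, ystar) - P d (xstar, y')))
          - α 0 * (P 0 (xstar, ystar) - P 0 (xstar, y'))) :
    mhat xstar ≠ ystar := by

  intro heq
  obtain ⟨R, hRnn, hRsum, hopt⟩ := hm
  have h1ε : (0:ℝ) < 1 - ε := by linarith
  have hεM : ε <
      (α c * margX (P c) xstar
          - (∑ d ∈ (Finset.univ.erase 0).erase c,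
              α d * (P d (xstar, ystar) - P d (xstar, y')))
          - α 0 * (P 0 (xstar, ystar) - P 0 (xstar, y'))) * (1 - ε) := by
    rw [div_lt_iff₀ h1ε] at hmargin
    linarith
  have hmargc : margX (P c) xstar = P c (xstar, y') := by
    unfold margX
    exact Finset.sum_eq_single y' (fun y _ hy => hconc y hy)
      (fun h => absurd (Finset.mem_univ y') h)
  -- key algebra for the mixture difference
  have key : (∑ d, α d * P d (xstar, ystar)) - (∑ d, α d * P d (xstar, y'))
      = (∑ d ∈ (Finset.univ.erase 0).erase c,
              α d * (P d (xstar, ystar) - P d (xstar, y')))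
        + α 0 * (P 0 (xstar, ystar) - P 0 (xstar, y'))
        - α c * margX (P c) xstar := by
    rw [← Finset.sum_sub_distrib]
    have hrw : ∀ d, α d * P d (xstar, ystar) - α d * P d (xstar, y')
        = α d * (P d (xstar, ystar) - P d (xstar, y')) := fun d => by ring
    simp_rw [hrw]
    rw [← Finset.add_sum_erase _ _ (Finset.mem_univ c),
        ← Finset.add_sum_erase _ _
          (Finset.mem_erase.mpr ⟨Ne.symm hc, Finset.mem_univ (0 : Fin (M+1))⟩),
        Finset.erase_right_comm]
    have hcterm : α c * (P c (xstar, ystar) - P c (xstar, y'))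
        = - (α c * margX (P c) xstar) := by
      rw [hconc ystar (Ne.symm hy'), hmargc]; ring
    rw [hcterm]; ring
  set Q : Y → ℝ := fun y => (1 - ε) * (∑ d, α d * P d (xstar, y)) + ε * R (xstar, y)
    with hQdef
  have hQnn : ∀ y, 0 ≤ Q y := by
    intro y
    have h1 : 0 ≤ ∑ d, α d * P d (xstar, y) :=
      Finset.sum_nonneg fun d _ => mul_nonneg (hα d) (hPnn d _)
    have h2 : 0 ≤ R (xstar, y) := hRnn _
    positivity
  have hR1 : R (xstar, ystar) ≤ 1 := by
    rw [← hRsum]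
    exact Finset.single_le_sum (fun z _ => hRnn z) (Finset.mem_univ _)
  have hdiff : Q ystar - Q y' < 0 := by
    have hRd : ε * (R (xstar, ystar) - R (xstar, y')) ≤ ε := by
      have : R (xstar, ystar) - R (xstar, y') ≤ 1 := by
        have := hRnn (xstar, y'); linarith
      nlinarith
    have : Q ystar - Q y'
        = (1 - ε) * ((∑ d, α d * P d (xstar, ystar)) - (∑ d, α d * P d (xstar, y')))
          + ε * (R (xstar, ystar) - R (xstar, y')) := by
      simp only [hQdef]; ring
    rw [this, key]
    nlinarith
  have hQy'pos : 0 < Q y' := lt_of_le_of_lt (hQnn ystar) (by linarith)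
  have hpos : 0 < ∑ y, ((1 - ε) * (∑ d, α d * P d (xstar, y)) + ε * R (xstar, y)) := by
    have hle : Q y' ≤ ∑ y, Q y :=
      Finset.single_le_sum (fun y _ => hQnn y) (Finset.mem_univ _)
    calc (0:ℝ) < Q y' := hQy'pos
      _ ≤ ∑ y, Q y := hle
  have hle := hopt xstar hx hpos y'
  rw [heq] at hle
  have : Q y' ≤ Q ystar := hle
  linarith
end

section
/- Fix sizes n₀ ≥ 1 and n ≥ 1, set N = n₀ + n, α = n/N. Let P₀ be a probability distribution on 𝒵 and draw mutually independent i.i.d.-from-P₀ samples: non-collective points {Z_i⁽⁰⁾}_{i≤n₀}, pre-edit collective points {Z_i}_{i≤n}, and test points {Z_i^t}_{i≤N^test} with N^test ≥ 1. Let g : 𝒳 → 𝒳 with image 𝒳* = g(𝒳), y* ∈ 𝒴, and let the collective apply the feature-label planting strategy h(x, y) = (g(x), y*). Define P̂_n = n^{-1} Σ_i δ_{h(Z_i)} with feature marginal p̂^X, P̂₀ = n₀^{-1} Σ_i δ_{Z_i⁽⁰⁾}, the empirical mixture P̂_N = (1−α) P̂₀ + α P̂_n, the pre-edit empirical measure P̂_n^{pre}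 = n^{-1} Σ_i δ_{Z_i} with feature marginal P̂_n^{pre,X}, and Δ₀^{(n)}(x*) = max_{y′ ≠ y*}(P̂_n^{pre}(x*, y′) − P̂_n^{pre}(x*, y*)). Let 0 ≤ ε < 1/2 and suppose the classifier m̂ : 𝒳 → 𝒴 is ε-contamination-suboptimal on 𝒳* under P̂_N. Let Ŝ = (N^test)^{-1} |{i : m̂(g(X_i^t)) = y*}|, R_γ(k) = √(log(1/γ)/(2k)), and δ̃ = δ/(10|𝒳*||𝒴|) for a given δ ∈ (0,1). Then, with probability at least 1 − δ: Ŝ ≥ ℙ_{x ∼ P̂_n^{pre,X}}[ α(p̂^X(g(x)) − 2R_{δ̃}(n)) − (1−α) Δ₀^{(n)}(g(x)) − 2(1−α)(R_{δ̃}(n₀) + R_{δ̃}(n)) − ε/(1−ε) > 0 ] − R_{δ/4}(n) − R_{δ/4}(N^test). -/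
open Finset
open scoped Classical

/-- Empirical distribution of the sample `w : Fin k → Z` :
`empDist w z` is the fraction of sample points equal to `z`. -/
noncomputable def empDist {Z : Type*} [Fintype Z] {k : ℕ} (w : Fin k → Z) : Z → ℝ :=
  fun z => ((Finset.univ.filter fun i => w i = z).card : ℝ) / k

/-- Hoeffding radius `R_γ(k) = √(log(1/γ)/(2k))`. -/
noncomputable def hoeffR (γ : ℝ) (k : ℕ) : ℝ :=
  Real.sqrt (Real.log (1 / γ) / (2 * k))

/-- The probability of the event `A` when the outcome `θ` (ranging over a finite
type) is drawn according to the probability mass function `p`. -/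
noncomputable def probOf {Θ : Type*} [Fintype Θ] (p : Θ → ℝ) (A : Θ → Prop) : ℝ :=
  ∑ θ ∈ Finset.univ.filter A, p θ

/-- The fraction of indices in `s` satisfying `A`. -/
noncomputable def fracOf {k : ℕ} (s : Finset (Fin k)) (A : Fin k → Prop) : ℝ :=
  ((s.filter A).card : ℝ) / s.card

noncomputable def hcg (μ x : ℝ) : ℝ := 1 - μ + μ * Real.exp x
noncomputable def hcD (μ x : ℝ) : ℝ := x / 4 + μ - μ * Real.exp x / hcg μ x
noncomputable def hcF (μ x : ℝ) : ℝ := x ^ 2 / 8 + x * μ - Real.log (hcg μ x)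

lemma hcg_pos {μ : ℝ} (h0 : 0 ≤ μ) (h1 : μ ≤ 1) (x : ℝ) : 0 < hcg μ x := by
  rcases lt_or_eq_of_le h1 with h | h
  · have := mul_nonneg h0 (Real.exp_pos x).le; unfold hcg; linarith
  · subst h; simpa [hcg] using Real.exp_pos x

lemma hcg_hasDeriv (μ x : ℝ) : HasDerivAt (hcg μ) (μ * Real.exp x) x := by
  unfold hcg
  simpa using ((Real.hasDerivAt_exp x).const_mul μ).const_add (1 - μ)

lemma hcF_hasDeriv {μ : ℝ} (h0 : 0 ≤ μ) (h1 : μ ≤ 1) (x : ℝ) :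
    HasDerivAt (hcF μ) (hcD μ x) x := by
  have h1' : HasDerivAt (fun x : ℝ => x ^ 2 / 8 + x * μ) (x / 4 + μ) x := by
    have := ((hasDerivAt_pow 2 x).div_const 8).add ((hasDerivAt_id x).mul_const μ)
    exact this.congr_deriv (by ring)
  have h2' : HasDerivAt (fun x => Real.log (hcg μ x)) (μ * Real.exp x / hcg μ x) x :=
    (hcg_hasDeriv μ x).log (hcg_pos h0 h1 x).ne'
  exact h1'.sub h2'

lemma hcD_hasDeriv {μ : ℝ} (h0 : 0 ≤ μ) (h1 : μ ≤ 1) (x : ℝ) :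
    HasDerivAt (hcD μ) (1 / 4 - μ * Real.exp x * (1 - μ) / hcg μ x ^ 2) x := by
  have h1' : HasDerivAt (fun x : ℝ => x / 4 + μ) (1 / 4) x := by
    simpa using (hasDerivAt_id x).div_const 4 |>.add_const μ
  have h2' : HasDerivAt (fun x => μ * Real.exp x / hcg μ x)
      ((μ * Real.exp x * hcg μ x - μ * Real.exp x * (μ * Real.exp x)) / hcg μ x ^ 2) x :=
    ((Real.hasDerivAt_exp x).const_mul μ).div (hcg_hasDeriv μ x) (hcg_pos h0 h1 x).ne'
  have key : μ * Real.exp x * hcg μ x - μ * Real.exp x * (μ * Real.exp x)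
      = μ * Real.exp x * (1 - μ) := by unfold hcg; ring
  have := h1'.sub h2'
  rw [key] at this
  exact this

lemma hcD_mono {μ : ℝ} (h0 : 0 ≤ μ) (h1 : μ ≤ 1) : Monotone (hcD μ) := by
  apply monotone_of_deriv_nonneg (fun x => (hcD_hasDeriv h0 h1 x).differentiableAt)
  intro x
  rw [(hcD_hasDeriv h0 h1 x).deriv]
  have hg2 : (0:ℝ) < hcg μ x ^ 2 := pow_pos (hcg_pos h0 h1 x) 2
  have hb : 4 * (μ * Real.exp x * (1 - μ)) ≤ hcg μ x ^ 2 := by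
    have h := sq_nonneg ((1 - μ) - μ * Real.exp x)
    unfold hcg; nlinarith [h]
  have hq : μ * Real.exp x * (1 - μ) / hcg μ x ^ 2 ≤ 1 / 4 := by
    rw [div_le_iff₀ hg2]; linarith
  linarith

lemma hcF_nonneg {μ : ℝ} (h0 : 0 ≤ μ) (h1 : μ ≤ 1) (x : ℝ) : 0 ≤ hcF μ x := by
  have hD0 : hcD μ 0 = 0 := by simp [hcD, hcg]
  have hF0 : hcF μ 0 = 0 := by simp [hcF, hcg]
  rcases le_total 0 x with hx | hx
  · have hmono : MonotoneOn (hcF μ) (Set.Ici 0) := by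
      apply monotoneOn_of_deriv_nonneg (convex_Ici 0)
        (fun y _ => (hcF_hasDeriv h0 h1 y).differentiableAt.continuousAt.continuousWithinAt)
        (fun y _ => (hcF_hasDeriv h0 h1 y).differentiableAt.differentiableWithinAt)
      intro y hy
      rw [(hcF_hasDeriv h0 h1 y).deriv]
      rw [interior_Ici] at hy
      calc (0:ℝ) = hcD μ 0 := hD0.symm
        _ ≤ hcD μ y := hcD_mono h0 h1 (le_of_lt hy)
    have := hmono (Set.self_mem_Ici) (Set.mem_Ici.2 hx) hx
    linarith [hF0 ▸ this]
  · have hmono : AntitoneOn (hcF μ) (Set.Iic 0) := by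
      apply antitoneOn_of_deriv_nonpos (convex_Iic 0)
        (fun y _ => (hcF_hasDeriv h0 h1 y).differentiableAt.continuousAt.continuousWithinAt)
        (fun y _ => (hcF_hasDeriv h0 h1 y).differentiableAt.differentiableWithinAt)
      intro y hy
      rw [(hcF_hasDeriv h0 h1 y).deriv]
      rw [interior_Iic] at hy
      calc hcD μ y ≤ hcD μ 0 := hcD_mono h0 h1 (le_of_lt hy)
        _ = 0 := hD0
    have := hmono (Set.mem_Iic.2 hx) (Set.self_mem_Iic) hx
    linarith [hF0 ▸ this]

/-- Hoeffding's lemma, Bernoulli form. -/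
lemma hoeff_core {μ : ℝ} (h0 : 0 ≤ μ) (h1 : μ ≤ 1) (c : ℝ) :
    Real.exp (-(c * μ)) * (1 - μ + μ * Real.exp c) ≤ Real.exp (c ^ 2 / 8) := by
  have hc := hcF_nonneg h0 h1 c
  have hgp := hcg_pos h0 h1 c
  have hlog : Real.log (hcg μ c) ≤ c ^ 2 / 8 + c * μ := by
    unfold hcF at hc; linarith
  have hle := (Real.log_le_iff_le_exp hgp).1 hlog
  calc Real.exp (-(c * μ)) * (1 - μ + μ * Real.exp c)
      = Real.exp (-(c * μ)) * hcg μ c := by rw [hcg]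
    _ ≤ Real.exp (-(c * μ)) * Real.exp (c ^ 2 / 8 + c * μ) :=
        mul_le_mul_of_nonneg_left hle (Real.exp_pos _).le
    _ = Real.exp (c ^ 2 / 8) := by rw [← Real.exp_add]; ring_nf

section ProbOf
variable {Θ : Type*} [Fintype Θ] {p : Θ → ℝ} {A B : Θ → Prop}

lemma probOf_eq_sum_ite (p : Θ → ℝ) (A : Θ → Prop) :
    probOf p A = ∑ θ, if A θ then p θ else 0 := Finset.sum_filter _ _

lemma probOf_nonneg (hp : ∀ θ, 0 ≤ p θ) : 0 ≤ probOf p A :=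
  Finset.sum_nonneg fun θ _ => hp θ

lemma probOf_mono (hp : ∀ θ, 0 ≤ p θ) (hAB : ∀ θ, A θ → B θ) :
    probOf p A ≤ probOf p B := by
  apply Finset.sum_le_sum_of_subset_of_nonneg
  · intro θ hθ
    simp only [Finset.mem_filter, Finset.mem_univ, true_and] at *
    exact hAB θ hθ
  · exact fun θ _ _ => hp θ

lemma probOf_exists_le {J : Type*} (s : Finset J) (hp : ∀ θ, 0 ≤ p θ)
    (A : J → Θ → Prop) :
    probOf p (fun θ => ∃ j ∈ s, A j θ) ≤ ∑ j ∈ s, probOf p (A j) := by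
  rw [probOf_eq_sum_ite]
  refine le_trans (Finset.sum_le_sum
    (g := fun θ => ∑ j ∈ s, if A j θ then p θ else 0) (fun θ _ => ?_)) ?_
  · split_ifs with hE
    · obtain ⟨j0, hj0, hAj0⟩ := hE
      calc p θ = (if A j0 θ then p θ else 0) := by simp [hAj0]
        _ ≤ ∑ j ∈ s, if A j θ then p θ else 0 :=
          Finset.single_le_sum (f := fun j => if A j θ then p θ else 0)
            (fun j _ => by by_cases hA : A j θ <;> simp [hA, hp θ]) hj0
    · exact Finset.sum_nonneg fun j _ => by by_cases hA : A j θ <;> simp [hA, hp θ]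
  · rw [Finset.sum_comm]
    exact le_of_eq (Finset.sum_congr rfl fun j _ => (probOf_eq_sum_ite _ _).symm)

lemma probOf_compl (hp1 : ∑ θ, p θ = 1) :
    probOf p A = 1 - probOf p (fun θ => ¬ A θ) := by
  have key : probOf p A + probOf p (fun θ => ¬ A θ) = 1 := by
    rw [probOf_eq_sum_ite, probOf_eq_sum_ite, ← Finset.sum_add_distrib, ← hp1]
    refine Finset.sum_congr rfl fun θ _ => ?_
    by_cases hA : A θ <;> simp [hA]
  linarith

end ProbOf

lemma sum_prod_pi {Θ : Type*} [Fintype Θ] (k : ℕ) (q : Θ → ℝ) :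
    ∑ w : Fin k → Θ, ∏ i, q (w i) = (∑ θ, q θ) ^ k := by
  rw [Finset.sum_pow' Finset.univ q k, Fintype.piFinset_univ]

section Hoeffding
variable {Θ : Type*} [Fintype Θ] (p f : Θ → ℝ)



lemma exp_interp {x c : ℝ} (h0 : 0 ≤ x) (h1 : x ≤ 1) :
    Real.exp (c * x) ≤ (1 - x) + x * Real.exp c := by
  have h := convexOn_exp.2 (Set.mem_univ (0:ℝ)) (Set.mem_univ c)
    (show (0:ℝ) ≤ 1 - x by linarith) h0 (show (1 - x) + x = 1 by ring)
  have h2 : (1 - x) • (0:ℝ) + x • c = c * x := by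
    rw [smul_zero, zero_add, smul_eq_mul, mul_comm]
  rw [h2] at h
  simpa [smul_eq_mul, Real.exp_zero] using h

lemma mgf_bound (hp : ∀ θ, 0 ≤ p θ) (hp1 : ∑ θ, p θ = 1)
    (hf0 : ∀ θ, 0 ≤ f θ) (hf1 : ∀ θ, f θ ≤ 1) (c : ℝ) :
    ∑ θ, p θ * Real.exp (c * (f θ - ∑ θ', p θ' * f θ')) ≤ Real.exp (c ^ 2 / 8) := by
  set μ := ∑ θ', p θ' * f θ' with hμ
  have hμ0 : 0 ≤ μ := Finset.sum_nonneg fun θ _ => mul_nonneg (hp θ) (hf0 θ)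
  have hμ1 : μ ≤ 1 := by
    rw [← hp1]
    exact Finset.sum_le_sum fun θ _ => by
      calc p θ * f θ ≤ p θ * 1 := mul_le_mul_of_nonneg_left (hf1 θ) (hp θ)
        _ = p θ := mul_one _
  have hconv : ∀ θ, Real.exp (c * f θ) ≤ (1 - f θ) + f θ * Real.exp c :=
    fun θ => exp_interp (hf0 θ) (hf1 θ)
  calc ∑ θ, p θ * Real.exp (c * (f θ - μ))
      = Real.exp (-(c * μ)) * ∑ θ, p θ * Real.exp (c * f θ) := by
        rw [Finset.mul_sum]
        refine Finset.sum_congr rfl fun θ _ => ?_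
        rw [mul_comm (Real.exp (-(c * μ)))]
        rw [mul_assoc, ← Real.exp_add]
        ring_nf
    _ ≤ Real.exp (-(c * μ)) * (1 - μ + μ * Real.exp c) := by
        apply mul_le_mul_of_nonneg_left _ (Real.exp_pos _).le
        have hterm : ∀ θ, p θ * ((1 - f θ) + f θ * Real.exp c)
            = p θ - p θ * f θ + (p θ * f θ) * Real.exp c := fun θ => by ring
        calc ∑ θ, p θ * Real.exp (c * f θ)
            ≤ ∑ θ, p θ * ((1 - f θ) + f θ * Real.exp c) :=
              Finset.sum_le_sum fun θ _ => mul_le_mul_of_nonneg_left (hconv θ) (hp θ)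
          _ = 1 - μ + μ * Real.exp c := by
              simp_rw [hterm]
              rw [Finset.sum_add_distrib, Finset.sum_sub_distrib, ← Finset.sum_mul,
                ← hμ, hp1]
    _ ≤ Real.exp (c ^ 2 / 8) := hoeff_core hμ0 hμ1 c

lemma chernoff (hp : ∀ θ, 0 ≤ p θ) (hp1 : ∑ θ, p θ = 1)
    (hf0 : ∀ θ, 0 ≤ f θ) (hf1 : ∀ θ, f θ ≤ 1) (k : ℕ) {t : ℝ} (ht : 0 ≤ t) :
    probOf (fun w : Fin k → Θ => ∏ i, p (w i))
      (fun w => (k : ℝ) * ((∑ θ, p θ * f θ) + t) ≤ ∑ i, f (w i)) ≤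
      Real.exp (-(2 * k * t ^ 2)) := by
  set μ := ∑ θ, p θ * f θ with hμ
  set c := 4 * t with hc
  have hc0 : 0 ≤ c := by positivity
  have hprodnn : ∀ w : Fin k → Θ, 0 ≤ ∏ i, p (w i) :=
    fun w => Finset.prod_nonneg fun i _ => hp _
  have hexp : ∀ w : Fin k → Θ,
      (∏ i, p (w i)) * Real.exp (c * ((∑ i, f (w i)) - k * (μ + t)))
        = Real.exp (-(c * k * t)) * ∏ i, (p (w i) * Real.exp (c * (f (w i) - μ))) := by
    intro w
    have hsum : ∑ i : Fin k, c * (f (w i) - μ) = c * (∑ i, f (w i)) - k * (c * μ) := by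
      simp only [mul_sub]
      rw [Finset.sum_sub_distrib, ← Finset.mul_sum, Finset.sum_const, Finset.card_univ,
        Fintype.card_fin, nsmul_eq_mul]
    have harg : c * ((∑ i, f (w i)) - k * (μ + t))
        = (∑ i : Fin k, c * (f (w i) - μ)) + (-(c * k * t)) := by rw [hsum]; ring
    rw [harg, Real.exp_add, Real.exp_sum, Finset.prod_mul_distrib]
    ring
  have hMnn : 0 ≤ ∑ θ, p θ * Real.exp (c * (f θ - μ)) :=
    Finset.sum_nonneg fun θ _ => mul_nonneg (hp θ) (Real.exp_pos _).le
  calc probOf (fun w : Fin k → Θ => ∏ i, p (w i))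
        (fun w => (k : ℝ) * (μ + t) ≤ ∑ i, f (w i))
      = ∑ w ∈ Finset.univ.filter (fun w : Fin k → Θ => (k : ℝ) * (μ + t) ≤ ∑ i, f (w i)),
          ∏ i, p (w i) := rfl
    _ ≤ ∑ w ∈ Finset.univ.filter (fun w : Fin k → Θ => (k : ℝ) * (μ + t) ≤ ∑ i, f (w i)),
          (∏ i, p (w i)) * Real.exp (c * ((∑ i, f (w i)) - k * (μ + t))) := by
        refine Finset.sum_le_sum fun w hw => ?_
        have hw' := (Finset.mem_filter.1 hw).2
        have hnn : (0:ℝ) ≤ c * ((∑ i, f (w i)) - k * (μ + t)) :=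
          mul_nonneg hc0 (by linarith)
        calc ∏ i, p (w i) = (∏ i, p (w i)) * 1 := (mul_one _).symm
          _ ≤ (∏ i, p (w i)) * Real.exp (c * ((∑ i, f (w i)) - k * (μ + t))) := by
              apply mul_le_mul_of_nonneg_left _ (hprodnn w)
              rw [← Real.exp_zero]
              exact Real.exp_le_exp.2 hnn
    _ ≤ ∑ w : Fin k → Θ,
          (∏ i, p (w i)) * Real.exp (c * ((∑ i, f (w i)) - k * (μ + t))) :=
        Finset.sum_le_sum_of_subset_of_nonneg (Finset.filter_subset _ _)
          (fun w _ _ => mul_nonneg (hprodnn w) (Real.exp_pos _).le)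
    _ = Real.exp (-(c * k * t)) * ∑ w : Fin k → Θ,
          ∏ i, (p (w i) * Real.exp (c * (f (w i) - μ))) := by
        rw [Finset.mul_sum]
        exact Finset.sum_congr rfl fun w _ => hexp w
    _ = Real.exp (-(c * k * t)) * (∑ θ, p θ * Real.exp (c * (f θ - μ))) ^ k := by
        rw [sum_prod_pi k (fun θ => p θ * Real.exp (c * (f θ - μ)))]
    _ ≤ Real.exp (-(c * k * t)) * Real.exp (c ^ 2 / 8) ^ k := by
        apply mul_le_mul_of_nonneg_left _ (Real.exp_pos _).le
        exact pow_le_pow_left₀ hMnn (mgf_bound p f hp hp1 hf0 hf1 c) k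
    _ = Real.exp (-(2 * k * t ^ 2)) := by
        rw [← Real.exp_nat_mul, ← Real.exp_add]
        congr 1
        rw [hc]
        ring

lemma exp_hoeffR {γ : ℝ} (hγ0 : 0 < γ) (hγ1 : γ ≤ 1) {k : ℕ} (hk : 1 ≤ k) :
    Real.exp (-(2 * k * hoeffR γ k ^ 2)) = γ := by
  have hk0 : (0:ℝ) < k := by exact_mod_cast hk
  have hL : 0 ≤ Real.log (1 / γ) := by
    rw [one_div, Real.log_inv]
    linarith [Real.log_nonpos hγ0.le hγ1]
  have hsq : hoeffR γ k ^ 2 = Real.log (1 / γ) / (2 * k) := by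
    unfold hoeffR
    rw [Real.sq_sqrt (div_nonneg hL (by positivity))]
  rw [hsq]
  have h2k : (2 * (k:ℝ)) ≠ 0 := by positivity
  rw [show 2 * (k:ℝ) * (Real.log (1 / γ) / (2 * k)) = Real.log (1 / γ) by
    field_simp]
  rw [one_div, Real.log_inv, neg_neg, Real.exp_log hγ0]


lemma fracOf_card {k : ℕ} (A : Fin k → Prop) :
    fracOf (Finset.univ : Finset (Fin k)) A
      = ((Finset.univ.filter A).card : ℝ) / k := by
  unfold fracOf
  rw [Finset.card_univ, Fintype.card_fin]

lemma fracOf_mono {k : ℕ} {A B : Fin k → Prop} (hAB : ∀ i, A i → B i) :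
    fracOf (Finset.univ : Finset (Fin k)) A ≤ fracOf (Finset.univ : Finset (Fin k)) B := by
  unfold fracOf
  have hsub : ((Finset.univ.filter A).card : ℝ) ≤ ((Finset.univ.filter B).card : ℝ) := by
    exact_mod_cast Finset.card_le_card (fun i hi => by
      simp only [Finset.mem_filter] at *
      exact ⟨hi.1, hAB i hi.2⟩)
  gcongr

lemma sum_ind_eq_card {Z : Type*} [Fintype Z] {k : ℕ} (Q : Z → Prop) (w : Fin k → Z) :
    ∑ i, (if Q (w i) then (1:ℝ) else 0)
      = ((Finset.univ.filter fun i => Q (w i)).card : ℝ) := by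
  rw [Finset.card_filter]
  push_cast
  rfl

lemma mean_ind_eq_probOf {Z : Type*} [Fintype Z] (p : Z → ℝ) (Q : Z → Prop) :
    ∑ z, p z * (if Q z then (1:ℝ) else 0) = probOf p Q := by
  rw [probOf_eq_sum_ite]
  refine Finset.sum_congr rfl fun z _ => ?_
  by_cases hQ : Q z <;> simp [hQ]

lemma hoeff_ind_upper {Z : Type*} [Fintype Z] {p : Z → ℝ}
    (hp : ∀ z, 0 ≤ p z) (hp1 : ∑ z, p z = 1) (Q : Z → Prop)
    {k : ℕ} (hk : 1 ≤ k) {γ : ℝ} (hγ0 : 0 < γ) (hγ1 : γ ≤ 1) :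
    probOf (fun w : Fin k → Z => ∏ i, p (w i))
      (fun w => probOf p Q + hoeffR γ k
        ≤ fracOf (Finset.univ : Finset (Fin k)) (fun i => Q (w i))) ≤ γ := by
  have hk0 : (0:ℝ) < k := by exact_mod_cast hk
  have ht : 0 ≤ hoeffR γ k := Real.sqrt_nonneg _
  set f : Z → ℝ := fun z => if Q z then (1:ℝ) else 0 with hf
  have hμ : ∑ z, p z * f z = probOf p Q := mean_ind_eq_probOf p Q
  have hmono : ∀ w : Fin k → Z,
      (probOf p Q + hoeffR γ k ≤ fracOf (Finset.univ : Finset (Fin k)) (fun i => Q (w i)))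
      → ((k : ℝ) * ((∑ z, p z * f z) + hoeffR γ k) ≤ ∑ i, f (w i)) := by
    intro w hw
    rw [hμ]
    have hs : ∑ i, f (w i) = ((Finset.univ.filter fun i => Q (w i)).card : ℝ) :=
      sum_ind_eq_card Q w
    rw [hs]
    rw [fracOf_card] at hw
    calc (k:ℝ) * (probOf p Q + hoeffR γ k)
        = (probOf p Q + hoeffR γ k) * k := mul_comm _ _
      _ ≤ _ := (le_div_iff₀ hk0).mp hw
  calc probOf (fun w : Fin k → Z => ∏ i, p (w i))
        (fun w => probOf p Q + hoeffR γ k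
          ≤ fracOf (Finset.univ : Finset (Fin k)) (fun i => Q (w i)))
      ≤ probOf (fun w : Fin k → Z => ∏ i, p (w i))
        (fun w => (k : ℝ) * ((∑ z, p z * f z) + hoeffR γ k) ≤ ∑ i, f (w i)) :=
        probOf_mono (fun w => Finset.prod_nonneg fun i _ => hp _) hmono
    _ ≤ Real.exp (-(2 * k * hoeffR γ k ^ 2)) :=
        chernoff p f hp hp1 (fun z => by by_cases hQ : Q z <;> simp [hf, hQ])
          (fun z => by by_cases hQ : Q z <;> simp [hf, hQ]) k ht
    _ = γ := exp_hoeffR hγ0 hγ1 hk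

end Hoeffding

lemma card_filter_real {α : Type*} [Fintype α] (p : α → Prop) [inst : DecidablePred p] :
    (((Finset.univ : Finset α).filter p).card : ℝ) = ∑ a, if p a then (1:ℝ) else 0 := by
  rw [Finset.card_filter]
  push_cast
  exact Finset.sum_congr rfl (fun a _ => by split_ifs <;> simp)

lemma filter_card_congr {α : Type*} [Fintype α] {p q : α → Prop}
    {instp : DecidablePred p} {instq : DecidablePred q} (hpq : ∀ a, p a ↔ q a) :
    ((@Finset.filter α p instp Finset.univ).card : ℝ)
      = ((@Finset.filter α q instq Finset.univ).card : ℝ) := by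
  rw [card_filter_real, card_filter_real]
  exact Finset.sum_congr rfl fun a _ => if_congr (hpq a) rfl rfl

lemma fracOf_compl {k : ℕ} (A : Fin k → Prop) (hk : 1 ≤ k) :
    fracOf (Finset.univ : Finset (Fin k)) (fun i => ¬ A i)
      = 1 - fracOf (Finset.univ : Finset (Fin k)) A := by
  have hk0 : (0:ℝ) < k := by exact_mod_cast hk
  unfold fracOf
  rw [Finset.card_univ, Fintype.card_fin]
  rw [eq_sub_iff_add_eq, ← add_div, div_eq_one_iff_eq hk0.ne']
  rw [card_filter_real, card_filter_real, ← Finset.sum_add_distrib]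
  refine Eq.trans (Finset.sum_congr rfl (g := fun _ => (1:ℝ))
    (fun i _ => by by_cases hA : A i <;> simp [hA])) ?_
  rw [Finset.sum_const, Finset.card_univ, Fintype.card_fin, nsmul_eq_mul, mul_one]

lemma hoeff_ind_lower {Z : Type*} [Fintype Z] {p : Z → ℝ}
    (hp : ∀ z, 0 ≤ p z) (hp1 : ∑ z, p z = 1) (Q : Z → Prop)
    {k : ℕ} (hk : 1 ≤ k) {γ : ℝ} (hγ0 : 0 < γ) (hγ1 : γ ≤ 1) :
    probOf (fun w : Fin k → Z => ∏ i, p (w i))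
      (fun w => fracOf (Finset.univ : Finset (Fin k)) (fun i => Q (w i))
        ≤ probOf p Q - hoeffR γ k) ≤ γ := by
  have h := hoeff_ind_upper hp hp1 (fun z => ¬ Q z) hk hγ0 hγ1
  refine le_trans (probOf_mono (fun w => Finset.prod_nonneg fun i _ => hp _) ?_) h
  intro w hw
  have h1 : probOf p (fun z => ¬ Q z) = 1 - probOf p Q := by
    have := probOf_compl (p := p) (A := Q) hp1
    linarith
  have h2 : fracOf (Finset.univ : Finset (Fin k)) (fun i => ¬ Q (w i))
      = 1 - fracOf (Finset.univ : Finset (Fin k)) (fun i => Q (w i)) :=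
    fracOf_compl _ hk
  rw [h1, h2]
  linarith

lemma probOf_union_le {Θ : Type*} [Fintype Θ] {p : Θ → ℝ} (hp : ∀ θ, 0 ≤ p θ)
    (A B : Θ → Prop) :
    probOf p (fun θ => A θ ∨ B θ) ≤ probOf p A + probOf p B := by
  rw [probOf_eq_sum_ite, probOf_eq_sum_ite, probOf_eq_sum_ite, ← Finset.sum_add_distrib]
  refine Finset.sum_le_sum fun θ _ => ?_
  by_cases hA : A θ <;> by_cases hB : B θ <;> simp [hA, hB, hp θ]

lemma probOf_eq_single {Z : Type*} [Fintype Z] (p : Z → ℝ) (z : Z) :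
    probOf p (fun z' => z' = z) = p z := by
  rw [probOf_eq_sum_ite]
  simp [Finset.sum_ite_eq]


section MaxOver
variable {Y : Type*} [Fintype Y] {ystar : Y}

lemma le_maxOver (hY : 2 ≤ Fintype.card Y) {f : Y → ℝ} {y' : Y} (hy' : y' ≠ ystar) :
    f y' ≤ maxOver ystar f := by
  have : Nonempty {y : Y // y ≠ ystar} := ⟨⟨y', hy'⟩⟩
  exact le_ciSup (f := fun y : {y : Y // y ≠ ystar} => f y)
    (Set.Finite.bddAbove (Set.finite_range _)) (⟨y', hy'⟩ : {y : Y // y ≠ ystar})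

lemma maxOver_le (hY : 2 ≤ Fintype.card Y) {f : Y → ℝ} {c : ℝ}
    (hc : ∀ y', y' ≠ ystar → f y' ≤ c) : maxOver ystar f ≤ c := by
  obtain ⟨y0, hy0⟩ := Fintype.exists_ne_of_one_lt_card (by omega) ystar
  have : Nonempty {y : Y // y ≠ ystar} := ⟨⟨y0, hy0⟩⟩
  exact ciSup_le fun y' => hc y'.1 y'.2

end MaxOver

section EmpDist
variable {Z : Type*} [Fintype Z] {k : ℕ}

lemma empDist_eq_fracOf (w : Fin k → Z) (z : Z) :
    empDist w z = fracOf (Finset.univ : Finset (Fin k)) (fun i => w i = z) := by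
  rw [fracOf_card]
  rfl

lemma empDist_nonneg (w : Fin k → Z) (z : Z) : 0 ≤ empDist w z := by
  unfold empDist
  positivity

end EmpDist

section Planted
variable {X Y : Type*} [Fintype X] [Fintype Y]
  (g : X → X) (ystar : Y) (h : X × Y → X × Y)
  (hstrat : ∀ x y, h (x, y) = (g x, ystar))

include hstrat

lemma planted_apply (z : X × Y) : h z = (g z.1, ystar) := by
  rw [← hstrat z.1 z.2]

lemma planted_ne {k : ℕ} (w : Fin k → X × Y) (x : X) {y : Y} (hy : y ≠ ystar) :
    empDist (fun i => h (w i)) (x, y) = 0 := by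
  unfold empDist
  rw [div_eq_zero_iff]
  left
  rw [card_filter_real]
  refine Finset.sum_eq_zero fun i _ => ?_
  rw [if_neg]
  show ¬ h (w i) = (x, y)
  rw [planted_apply g ystar h hstrat (w i)]
  intro hc
  exact hy (congrArg Prod.snd hc).symm

lemma planted_star {k : ℕ} (w : Fin k → X × Y) (x : X) :
    empDist (fun i => h (w i)) (x, ystar) = margX (empDist fun i => h (w i)) x := by
  unfold margX
  rw [Finset.sum_eq_single ystar]
  · intro y _ hy
    exact planted_ne g ystar h hstrat w x hy
  · intro hm
    exact absurd (Finset.mem_univ ystar) hm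

lemma margX_planted {k : ℕ} (w : Fin k → X × Y) (x : X) :
    margX (empDist fun i => h (w i)) x
      = fracOf (Finset.univ : Finset (Fin k)) (fun i => g (w i).1 = x) := by
  rw [← planted_star g ystar h hstrat w x, empDist_eq_fracOf, fracOf_card, fracOf_card]
  congr 1
  refine filter_card_congr fun i => ?_
  rw [planted_apply g ystar h hstrat (w i)]
  simp [Prod.ext_iff]

end Planted

section Marginal
variable {A B : Type*} [Fintype A] [Fintype B]

lemma probOf_prod_left (pa : A → ℝ) (pb : B → ℝ) (hb1 : ∑ b, pb b = 1) (E : A → Prop) :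
    probOf (fun ab : A × B => pa ab.1 * pb ab.2) (fun ab => E ab.1) = probOf pa E := by
  rw [probOf_eq_sum_ite, probOf_eq_sum_ite, Fintype.sum_prod_type]
  refine Finset.sum_congr rfl fun a _ => ?_
  by_cases hE : E a
  · simp only [hE, if_true]
    rw [← Finset.mul_sum, hb1, mul_one]
  · simp [hE]

lemma probOf_prod_right (pa : A → ℝ) (pb : B → ℝ) (ha1 : ∑ a, pa a = 1) (E : B → Prop) :
    probOf (fun ab : A × B => pa ab.1 * pb ab.2) (fun ab => E ab.2) = probOf pb E := by
  rw [probOf_eq_sum_ite, probOf_eq_sum_ite, Fintype.sum_prod_type, Finset.sum_comm]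
  refine Finset.sum_congr rfl fun b _ => ?_
  by_cases hE : E b
  · simp only [hE, if_true]
    rw [← Finset.sum_mul, ha1, one_mul]
  · simp [hE]

end Marginal


lemma sum_prod_pmf_one {A B : Type*} [Fintype A] [Fintype B] {pa : A → ℝ} {pb : B → ℝ}
    (ha : ∑ a, pa a = 1) (hb : ∑ b, pb b = 1) :
    ∑ ab : A × B, pa ab.1 * pb ab.2 = 1 := by
  rw [Fintype.sum_prod_type]
  calc ∑ a, ∑ b, pa a * pb b = ∑ a, pa a * ∑ b, pb b := by
        refine Finset.sum_congr rfl fun a _ => ?_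
        rw [← Finset.mul_sum]
    _ = 1 := by
        simp only [hb, mul_one]
        exact ha

section DetCore
variable {X Y : Type*} [Fintype X] [Fintype Y]

/-- Arithmetic step: the empirical condition in the theorem statement implies the
population-level condition `Astar (g x)`, given the concentration facts. -/
lemma cond_to_astar (hY : 2 ≤ Fintype.card Y)
    {n0 n N : ℕ} (hn0 : 1 ≤ n0) (hn : 1 ≤ n) (hN : N = n0 + n)
    (P0 : X × Y → ℝ)
    (g : X → X) (ystar : Y) (h : X × Y → X × Y)
    {ε R0 R1 : ℝ} (hR0 : 0 ≤ R0) (hR1 : 0 ≤ R1)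
    (w : Fin n → X × Y)
    (hG2 : ∀ z : X × Y, z.1 ∈ Set.range g →
      P0 z - R1 ≤ empDist w z ∧ empDist w z ≤ P0 z + R1)
    (hG3 : ∀ x, x ∈ Set.range g →
      probOf P0 (fun z => g z.1 = x) - R1 ≤ margX (empDist fun i => h (w i)) x
        ∧ margX (empDist fun i => h (w i)) x ≤ probOf P0 (fun z => g z.1 = x) + R1)
    (x : X)
    (hcond : 0 < (n : ℝ) / N * (margX (empDist fun j => h (w j)) (g x) - 2 * R1)
        - (1 - (n : ℝ) / N) * maxOver ystar (fun y' =>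
            empDist w (g x, y') - empDist w (g x, ystar))
        - 2 * (1 - (n : ℝ) / N) * (R0 + R1) - ε / (1 - ε)) :
    0 < (n : ℝ) / N * (probOf P0 (fun z => g z.1 = g x) - R1)
      - (1 - (n : ℝ) / N) * (maxOver ystar (fun y' => P0 (g x, y') - P0 (g x, ystar)) + 2 * R0)
      - ε / (1 - ε) := by
  have hNpos : (0:ℝ) < N := by
    have : 1 ≤ N := by omega
    exact_mod_cast Nat.lt_of_lt_of_le Nat.zero_lt_one this
  have hα0 : 0 ≤ (n : ℝ) / N := by positivity
  have hα1 : (n : ℝ) / N ≤ 1 := by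
    rw [div_le_one hNpos]
    exact_mod_cast Nat.le.intro (by omega : n + n0 = N)
  have h1α : 0 ≤ 1 - (n : ℝ) / N := by linarith
  have hmarg := (hG3 (g x) ⟨x, rfl⟩).2
  have hΔ : maxOver ystar (fun y' => P0 (g x, y') - P0 (g x, ystar))
      ≤ maxOver ystar (fun y' => empDist w (g x, y') - empDist w (g x, ystar)) + 2 * R1 := by
    refine maxOver_le hY fun y' hy' => ?_
    have h1 := (hG2 (g x, y') ⟨x, rfl⟩).1
    have h2 := (hG2 (g x, ystar) ⟨x, rfl⟩).2
    have h3 := le_maxOver (ystar := ystar) hY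
      (f := fun y' => empDist w (g x, y') - empDist w (g x, ystar)) hy'
    linarith
  have k1 : (n : ℝ) / N * (margX (empDist fun j => h (w j)) (g x) - 2 * R1)
      ≤ (n : ℝ) / N * (probOf P0 (fun z => g z.1 = g x) - R1) :=
    mul_le_mul_of_nonneg_left (by linarith) hα0
  have k2 : (1 - (n : ℝ) / N) * maxOver ystar (fun y' => P0 (g x, y') - P0 (g x, ystar))
      ≤ (1 - (n : ℝ) / N) * (maxOver ystar (fun y' =>
          empDist w (g x, y') - empDist w (g x, ystar)) + 2 * R1) :=
    mul_le_mul_of_nonneg_left hΔ h1α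
  nlinarith [hcond, k1, k2]

/-- Deterministic core: under the concentration facts, the population condition
forces the suboptimal classifier to output `ystar` on `g x`. -/
lemma det_core (hY : 2 ≤ Fintype.card Y)
    {n0 n N : ℕ} (hn0 : 1 ≤ n0) (hn : 1 ≤ n) (hN : N = n0 + n)
    (P0 : X × Y → ℝ)
    (g : X → X) (ystar : Y) (h : X × Y → X × Y)
    (hstrat : ∀ x y, h (x, y) = (g x, ystar))
    {ε : ℝ} (hε0 : 0 ≤ ε) (hε1 : ε < 1 / 2)
    {R0 R1 : ℝ} (hR0 : 0 ≤ R0) (hR1 : 0 ≤ R1)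
    (w0 : Fin n0 → X × Y) (w : Fin n → X × Y)
    (mh : X → Y)
    (hsub : ContamSuboptimal ε
      (fun z => (1 - (n : ℝ) / N) * empDist w0 z
        + ((n : ℝ) / N) * empDist (fun i => h (w i)) z) (Set.range g) mh)
    (hG1 : ∀ z : X × Y, z.1 ∈ Set.range g →
      P0 z - R0 ≤ empDist w0 z ∧ empDist w0 z ≤ P0 z + R0)
    (hG3 : ∀ x, x ∈ Set.range g →
      probOf P0 (fun z => g z.1 = x) - R1 ≤ margX (empDist fun i => h (w i)) x
        ∧ margX (empDist fun i => h (w i)) x ≤ probOf P0 (fun z => g z.1 = x) + R1)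
    (x : X)
    (hA : 0 < (n : ℝ) / N * (probOf P0 (fun z => g z.1 = g x) - R1)
        - (1 - (n : ℝ) / N) * (maxOver ystar (fun y' => P0 (g x, y') - P0 (g x, ystar)) + 2 * R0)
        - ε / (1 - ε)) :
    mh (g x) = ystar := by
  have hNpos : (0:ℝ) < N := by
    have : 1 ≤ N := by omega
    exact_mod_cast Nat.lt_of_lt_of_le Nat.zero_lt_one this
  have hα0 : 0 ≤ (n : ℝ) / N := by positivity
  have hα1 : (n : ℝ) / N ≤ 1 := by
    rw [div_le_one hNpos]
    exact_mod_cast Nat.le.intro (by omega : n + n0 = N)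
  have h1α : 0 ≤ 1 - (n : ℝ) / N := by linarith
  have h1ε : (0:ℝ) < 1 - ε := by linarith
  obtain ⟨R, hRnn, hRsum, hopt⟩ := hsub
  set G : Y → ℝ := fun y => (1 - ε) * ((1 - (n : ℝ) / N) * empDist w0 (g x, y)
    + ((n : ℝ) / N) * empDist (fun i => h (w i)) (g x, y)) + ε * R (g x, y) with hGdef
  have hGnn : ∀ y, 0 ≤ G y := by
    intro y
    rw [hGdef]
    have e1 := empDist_nonneg w0 (g x, y)
    have e2 := empDist_nonneg (fun i => h (w i)) (g x, y)
    have e3 := hRnn (g x, y)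
    positivity
  have hRle1 : ∀ z, R z ≤ 1 := by
    intro z
    have := Finset.single_le_sum (f := R) (fun z' _ => hRnn z') (Finset.mem_univ z)
    rw [hRsum] at this
    exact this
  have hgap : ∀ y', y' ≠ ystar → G y' < G ystar := by
    intro y' hy'
    have hzero : empDist (fun i => h (w i)) (g x, y') = 0 :=
      planted_ne g ystar h hstrat w (g x) hy'
    have hstar : empDist (fun i => h (w i)) (g x, ystar)
        = margX (empDist fun i => h (w i)) (g x) :=
      planted_star g ystar h hstrat w (g x)
    have hpop : P0 (g x, y') - P0 (g x, ystar)
        ≤ maxOver ystar (fun y'' => P0 (g x, y'') - P0 (g x, ystar)) := by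
      have := le_maxOver (ystar := ystar) hY
        (f := fun y'' => P0 (g x, y'') - P0 (g x, ystar)) hy'
      simpa using this
    have e1 := (hG1 (g x, ystar) ⟨x, rfl⟩).1
    have e2 := (hG1 (g x, y') ⟨x, rfl⟩).2
    have hq := (hG3 (g x) ⟨x, rfl⟩).1
    have k1 : (1 - (n : ℝ) / N) * (P0 (g x, ystar) - R0)
        ≤ (1 - (n : ℝ) / N) * empDist w0 (g x, ystar) :=
      mul_le_mul_of_nonneg_left e1 h1α
    have k2 : (1 - (n : ℝ) / N) * empDist w0 (g x, y')
        ≤ (1 - (n : ℝ) / N) * (P0 (g x, y') + R0) :=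
      mul_le_mul_of_nonneg_left e2 h1α
    have k3 : (n : ℝ) / N * (probOf P0 (fun z => g z.1 = g x) - R1)
        ≤ (n : ℝ) / N * margX (empDist fun i => h (w i)) (g x) :=
      mul_le_mul_of_nonneg_left hq hα0
    have k4 : (1 - (n : ℝ) / N) * (P0 (g x, y') - P0 (g x, ystar))
        ≤ (1 - (n : ℝ) / N) * maxOver ystar (fun y'' => P0 (g x, y'') - P0 (g x, ystar)) :=
      mul_le_mul_of_nonneg_left hpop h1α
    have hKgt : ε / (1 - ε)
        < (1 - (n : ℝ) / N) * empDist w0 (g x, ystar)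
          + (n : ℝ) / N * margX (empDist fun i => h (w i)) (g x)
          - (1 - (n : ℝ) / N) * empDist w0 (g x, y') := by
      nlinarith [hA, k1, k2, k3, k4]
    have hK2 := mul_lt_mul_of_pos_left hKgt h1ε
    have m3 : (1 - ε) * (ε / (1 - ε)) = ε := by field_simp
    rw [m3] at hK2
    have kε : ε * R (g x, y') ≤ ε := by
      calc ε * R (g x, y') ≤ ε * 1 := mul_le_mul_of_nonneg_left (hRle1 _) hε0
        _ = ε := mul_one ε
    have kR : 0 ≤ ε * R (g x, ystar) := mul_nonneg hε0 (hRnn _)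
    rw [hGdef]
    simp only [hzero, hstar]
    nlinarith [hK2, kε, kR]
  have hy0 : ∃ y0 : Y, y0 ≠ ystar := Fintype.exists_ne_of_one_lt_card (by omega) ystar
  obtain ⟨y0, hy0⟩ := hy0
  have hpos : 0 < ∑ y, G y := by
    have h1 : G ystar ≤ ∑ y, G y :=
      Finset.single_le_sum (f := G) (fun y _ => hGnn y) (Finset.mem_univ ystar)
    have h2 : G y0 < G ystar := hgap y0 hy0
    have h3 : 0 ≤ G y0 := hGnn y0
    linarith
  have happ := hopt (g x) ⟨x, rfl⟩ hpos
  by_contra hne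
  have hlt := hgap (mh (g x)) hne
  have hle : G ystar ≤ G (mh (g x)) := happ ystar
  linarith

end DetCore

set_option maxHeartbeats 4000000

/-- single-collective signal planting, conditional formulation:
one collective of size `n` applies the feature-label planting strategy
`h(x,y) = (g x, y*)`; with a non-collective sample of size `n₀` and a test sample of
size `Ntest`, all i.i.d. from `P₀` (modelled by the product pmf on the joint sample
space), if the trained classifier is `ε`-contamination-suboptimal on `𝒳* = g(𝒳)`
under the post-edit empirical mixture for every realization of the training data,
then with probability at least `1 − δ` the success `Ŝ` satisfies the stated
lower bound. -/
theorem stmt_16 {X Y : Type*} [Fintype X] [Fintype Y] [Nonempty X] [Nonempty Y]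
    (hY : 2 ≤ Fintype.card Y)
    (n0 : ℕ) (hn0 : 1 ≤ n0) (n : ℕ) (hn : 1 ≤ n)
    (N : ℕ) (hN : N = n0 + n)
    (Ntest : ℕ) (hNtest : 1 ≤ Ntest)
    (P0 : X × Y → ℝ) (hP0nn : ∀ z, 0 ≤ P0 z) (hP0sum : ∑ z, P0 z = 1)
    (g : X → X) (ystar : Y)
    (h : X × Y → X × Y) (hstrat : ∀ x y, h (x, y) = (g x, ystar))
    (ε : ℝ) (hε0 : 0 ≤ ε) (hε1 : ε < 1 / 2)
    (δ : ℝ) (hδ0 : 0 < δ) (hδ1 : δ < 1)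
    (δt : ℝ) (hδt : δt = δ / (10 * ((Finset.univ.image g).card * Fintype.card Y)))
    (mhat : (Fin n0 → X × Y) → (Fin n → X × Y) → X → Y)
    (hsub : ∀ (w0 : Fin n0 → X × Y) (w : Fin n → X × Y),
      ContamSuboptimal ε
        (fun z => (1 - (n : ℝ) / N) * empDist w0 z
          + ((n : ℝ) / N) * empDist (fun i => h (w i)) z)
        (Set.range g) (mhat w0 w)) :
    1 - δ ≤
      probOf
        (fun θ : (Fin n0 → X × Y) × (Fin n → X × Y) × (Fin Ntest → X × Y) =>
          (∏ i, P0 (θ.1 i)) * (∏ i, P0 (θ.2.1 i)) * ∏ i, P0 (θ.2.2 i))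
        (fun θ =>
          fracOf (Finset.univ : Finset (Fin n)) (fun i =>
              0 <
                ((n : ℝ) / N) *
                    (margX (empDist fun j => h (θ.2.1 j)) (g (θ.2.1 i).1)
                      - 2 * hoeffR δt n)
                  - (1 - (n : ℝ) / N) *
                      maxOver ystar (fun y' =>
                        empDist θ.2.1 (g (θ.2.1 i).1, y')
                          - empDist θ.2.1 (g (θ.2.1 i).1, ystar))
                  - 2 * (1 - (n : ℝ) / N) * (hoeffR δt n0 + hoeffR δt n)
                  - ε / (1 - ε))
            - hoeffR (δ / 4) n - hoeffR (δ / 4) Ntest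
          ≤ fracOf (Finset.univ : Finset (Fin Ntest))
              (fun i => mhat θ.1 θ.2.1 (g (θ.2.2 i).1) = ystar)) := by
  -- ## Setup and numeric facts
  have hcgY : 1 ≤ (Finset.univ.image g).card :=
    Finset.card_pos.2 (Finset.univ_nonempty.image g)
  have hcgY' : (0:ℝ) < ((Finset.univ.image g).card : ℝ) * (Fintype.card Y : ℝ) := by
    have h1 : (1:ℝ) ≤ ((Finset.univ.image g).card : ℝ) := by exact_mod_cast hcgY
    have h2 : (2:ℝ) ≤ (Fintype.card Y : ℝ) := by exact_mod_cast hY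
    nlinarith
  have hδt0 : 0 < δt := by
    rw [hδt]
    push_cast
    positivity
  have hδt1 : δt ≤ 1 := by
    rw [hδt]
    have h10 : (20:ℝ) ≤ 10 * (((Finset.univ.image g).card : ℝ) * (Fintype.card Y : ℝ)) := by
      have h1 : (1:ℝ) ≤ ((Finset.univ.image g).card : ℝ) := by exact_mod_cast hcgY
      have h2 : (2:ℝ) ≤ (Fintype.card Y : ℝ) := by exact_mod_cast hY
      nlinarith
    have : δ / (10 * (((Finset.univ.image g).card : ℕ) * (Fintype.card Y : ℕ) : ℕ)) ≤ δ / 20 := by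
      push_cast
      apply div_le_div_of_nonneg_left hδ0.le (by norm_num) h10
    push_cast at this ⊢
    linarith
  have hδ40 : 0 < δ / 4 := by linarith
  have hδ41 : δ / 4 ≤ 1 := by linarith
  have hR0nn : 0 ≤ hoeffR δt n0 := Real.sqrt_nonneg _
  have hR1nn : 0 ≤ hoeffR δt n := Real.sqrt_nonneg _
  -- pmf components
  set pa : (Fin n0 → X × Y) → ℝ := fun w0 => ∏ i, P0 (w0 i) with hpa
  set pb : (Fin n → X × Y) → ℝ := fun w => ∏ i, P0 (w i) with hpb
  set pc : (Fin Ntest → X × Y) → ℝ := fun wt => ∏ i, P0 (wt i) with hpc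
  set pbc : (Fin n → X × Y) × (Fin Ntest → X × Y) → ℝ := fun bc => pb bc.1 * pc bc.2 with hpbc
  have hpann : ∀ w0, 0 ≤ pa w0 := fun w0 => Finset.prod_nonneg fun i _ => hP0nn _
  have hpbnn : ∀ w, 0 ≤ pb w := fun w => Finset.prod_nonneg fun i _ => hP0nn _
  have hpcnn : ∀ wt, 0 ≤ pc wt := fun wt => Finset.prod_nonneg fun i _ => hP0nn _
  have hpa1 : ∑ w0, pa w0 = 1 := by rw [hpa, sum_prod_pi, hP0sum, one_pow]
  have hpb1 : ∑ w, pb w = 1 := by rw [hpb, sum_prod_pi, hP0sum, one_pow]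
  have hpc1 : ∑ wt, pc wt = 1 := by rw [hpc, sum_prod_pi, hP0sum, one_pow]
  have hpbc1 : ∑ bc, pbc bc = 1 := by
    rw [hpbc]
    exact sum_prod_pmf_one hpb1 hpc1
  have hpT : (fun θ : (Fin n0 → X × Y) × (Fin n → X × Y) × (Fin Ntest → X × Y) =>
      (∏ i, P0 (θ.1 i)) * (∏ i, P0 (θ.2.1 i)) * ∏ i, P0 (θ.2.2 i))
      = fun θ => pa θ.1 * pbc θ.2 := by
    funext θ
    rw [hpa, hpbc, hpb, hpc]
    ring
  have hpT1 : ∑ θ : (Fin n0 → X × Y) × (Fin n → X × Y) × (Fin Ntest → X × Y),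
      (∏ i, P0 (θ.1 i)) * (∏ i, P0 (θ.2.1 i)) * ∏ i, P0 (θ.2.2 i) = 1 := by
    rw [hpT]
    exact sum_prod_pmf_one hpa1 hpbc1
  have hpTnn : ∀ θ : (Fin n0 → X × Y) × (Fin n → X × Y) × (Fin Ntest → X × Y),
      0 ≤ (∏ i, P0 (θ.1 i)) * (∏ i, P0 (θ.2.1 i)) * ∏ i, P0 (θ.2.2 i) := by
    intro θ
    have := hpann θ.1
    have := hpbnn θ.2.1
    have := hpcnn θ.2.2
    rw [hpa] at *
    positivity
  -- ## the population condition
  set Astar : X → Prop := fun xs =>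
    0 < (n : ℝ) / N * (probOf P0 (fun z => g z.1 = xs) - hoeffR δt n)
      - (1 - (n : ℝ) / N) * (maxOver ystar (fun y' => P0 (xs, y') - P0 (xs, ystar))
          + 2 * hoeffR δt n0)
      - ε / (1 - ε) with hAstar
  -- ## bad events
  set bad1 : (Fin n0 → X × Y) → Prop := fun w0 =>
    ∃ z ∈ (Finset.univ.image g) ×ˢ (Finset.univ : Finset Y),
      (P0 z + hoeffR δt n0 ≤ empDist w0 z ∨ empDist w0 z ≤ P0 z - hoeffR δt n0) with hbad1
  set bad2 : (Fin n → X × Y) → Prop := fun w =>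
    ∃ z ∈ (Finset.univ.image g) ×ˢ (Finset.univ : Finset Y),
      (P0 z + hoeffR δt n ≤ empDist w z ∨ empDist w z ≤ P0 z - hoeffR δt n) with hbad2
  set bad3 : (Fin n → X × Y) → Prop := fun w =>
    ∃ xs ∈ Finset.univ.image g,
      (probOf P0 (fun z => g z.1 = xs) + hoeffR δt n ≤ margX (empDist fun i => h (w i)) xs
        ∨ margX (empDist fun i => h (w i)) xs ≤ probOf P0 (fun z => g z.1 = xs) - hoeffR δt n)
    with hbad3
  set bad4 : (Fin n → X × Y) → Prop := fun w =>
    probOf P0 (fun z : X × Y => Astar (g z.1)) + hoeffR (δ / 4) n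
      ≤ fracOf (Finset.univ : Finset (Fin n)) (fun i => Astar (g (w i).1)) with hbad4
  set bad5 : (Fin Ntest → X × Y) → Prop := fun wt =>
    fracOf (Finset.univ : Finset (Fin Ntest)) (fun i => Astar (g (wt i).1))
      ≤ probOf P0 (fun z : X × Y => Astar (g z.1)) - hoeffR (δ / 4) Ntest with hbad5
  set B234 : (Fin n → X × Y) → Prop := fun w => bad2 w ∨ bad3 w ∨ bad4 w with hB234
  -- ## probability bounds on bad events
  have hbad1_le : probOf pa bad1 ≤ δ / 5 := by
    refine le_trans (probOf_exists_le _ hpann _) ?_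
    have htail : ∀ z : X × Y,
        probOf pa (fun w0 => P0 z + hoeffR δt n0 ≤ empDist w0 z
          ∨ empDist w0 z ≤ P0 z - hoeffR δt n0) ≤ 2 * δt := by
      intro z
      refine le_trans (probOf_union_le hpann _ _) ?_
      have hup : probOf pa (fun w0 => P0 z + hoeffR δt n0 ≤ empDist w0 z) ≤ δt := by
        refine le_trans (probOf_mono hpann ?_)
          (hoeff_ind_upper hP0nn hP0sum (fun z' => z' = z) hn0 hδt0 hδt1)
        intro w0 hw0
        rw [probOf_eq_single, ← empDist_eq_fracOf]
        exact hw0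
      have hdn : probOf pa (fun w0 => empDist w0 z ≤ P0 z - hoeffR δt n0) ≤ δt := by
        refine le_trans (probOf_mono hpann ?_)
          (hoeff_ind_lower hP0nn hP0sum (fun z' => z' = z) hn0 hδt0 hδt1)
        intro w0 hw0
        rw [probOf_eq_single, ← empDist_eq_fracOf]
        exact hw0
      linarith
    calc ∑ z ∈ (Finset.univ.image g) ×ˢ (Finset.univ : Finset Y),
          probOf pa (fun w0 => P0 z + hoeffR δt n0 ≤ empDist w0 z
            ∨ empDist w0 z ≤ P0 z - hoeffR δt n0)
        ≤ ∑ _z ∈ (Finset.univ.image g) ×ˢ (Finset.univ : Finset Y), 2 * δt :=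
          Finset.sum_le_sum fun z _ => htail z
      _ = (((Finset.univ.image g) ×ˢ (Finset.univ : Finset Y)).card : ℝ) * (2 * δt) := by
          rw [Finset.sum_const, nsmul_eq_mul]
      _ = δ / 5 := by
          rw [Finset.card_product, Finset.card_univ, hδt]
          push_cast
          field_simp
          ring
  have hbad2_le : probOf pb bad2 ≤ δ / 5 := by
    refine le_trans (probOf_exists_le _ hpbnn _) ?_
    have htail : ∀ z : X × Y,
        probOf pb (fun w => P0 z + hoeffR δt n ≤ empDist w z
          ∨ empDist w z ≤ P0 z - hoeffR δt n) ≤ 2 * δt := by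
      intro z
      refine le_trans (probOf_union_le hpbnn _ _) ?_
      have hup : probOf pb (fun w => P0 z + hoeffR δt n ≤ empDist w z) ≤ δt := by
        refine le_trans (probOf_mono hpbnn ?_)
          (hoeff_ind_upper hP0nn hP0sum (fun z' => z' = z) hn hδt0 hδt1)
        intro w hw
        rw [probOf_eq_single, ← empDist_eq_fracOf]
        exact hw
      have hdn : probOf pb (fun w => empDist w z ≤ P0 z - hoeffR δt n) ≤ δt := by
        refine le_trans (probOf_mono hpbnn ?_)
          (hoeff_ind_lower hP0nn hP0sum (fun z' => z' = z) hn hδt0 hδt1)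
        intro w hw
        rw [probOf_eq_single, ← empDist_eq_fracOf]
        exact hw
      linarith
    calc ∑ z ∈ (Finset.univ.image g) ×ˢ (Finset.univ : Finset Y),
          probOf pb (fun w => P0 z + hoeffR δt n ≤ empDist w z
            ∨ empDist w z ≤ P0 z - hoeffR δt n)
        ≤ ∑ _z ∈ (Finset.univ.image g) ×ˢ (Finset.univ : Finset Y), 2 * δt :=
          Finset.sum_le_sum fun z _ => htail z
      _ = (((Finset.univ.image g) ×ˢ (Finset.univ : Finset Y)).card : ℝ) * (2 * δt) := by
          rw [Finset.sum_const, nsmul_eq_mul]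
      _ = δ / 5 := by
          rw [Finset.card_product, Finset.card_univ, hδt]
          push_cast
          field_simp
          ring
  have hbad3_le : probOf pb bad3 ≤ δ / 10 := by
    refine le_trans (probOf_exists_le _ hpbnn _) ?_
    have htail : ∀ xs : X,
        probOf pb (fun w =>
          probOf P0 (fun z => g z.1 = xs) + hoeffR δt n ≤ margX (empDist fun i => h (w i)) xs
          ∨ margX (empDist fun i => h (w i)) xs ≤ probOf P0 (fun z => g z.1 = xs) - hoeffR δt n)
          ≤ 2 * δt := by
      intro xs
      refine le_trans (probOf_union_le hpbnn _ _) ?_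
      have hup : probOf pb (fun w =>
          probOf P0 (fun z => g z.1 = xs) + hoeffR δt n
            ≤ margX (empDist fun i => h (w i)) xs) ≤ δt := by
        refine le_trans (probOf_mono hpbnn ?_)
          (hoeff_ind_upper hP0nn hP0sum (fun z => g z.1 = xs) hn hδt0 hδt1)
        intro w hw
        rw [← margX_planted g ystar h hstrat w xs]
        exact hw
      have hdn : probOf pb (fun w =>
          margX (empDist fun i => h (w i)) xs
            ≤ probOf P0 (fun z => g z.1 = xs) - hoeffR δt n) ≤ δt := by
        refine le_trans (probOf_mono hpbnn ?_)
          (hoeff_ind_lower hP0nn hP0sum (fun z => g z.1 = xs) hn hδt0 hδt1)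
        intro w hw
        rw [← margX_planted g ystar h hstrat w xs]
        exact hw
      linarith
    calc ∑ xs ∈ Finset.univ.image g,
          probOf pb (fun w =>
            probOf P0 (fun z => g z.1 = xs) + hoeffR δt n
              ≤ margX (empDist fun i => h (w i)) xs
            ∨ margX (empDist fun i => h (w i)) xs
              ≤ probOf P0 (fun z => g z.1 = xs) - hoeffR δt n)
        ≤ ∑ _xs ∈ Finset.univ.image g, 2 * δt := Finset.sum_le_sum fun xs _ => htail xs
      _ = ((Finset.univ.image g).card : ℝ) * (2 * δt) := by
          rw [Finset.sum_const, nsmul_eq_mul]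
      _ ≤ δ / 10 := by
          rw [hδt]
          have h2 : (2:ℝ) ≤ (Fintype.card Y : ℝ) := by exact_mod_cast hY
          have h1 : (0:ℝ) < ((Finset.univ.image g).card : ℝ) := by
            exact_mod_cast hcgY
          have ha : ((Finset.univ.image g).card : ℝ) ≠ 0 := h1.ne'
          have hy : (Fintype.card Y : ℝ) ≠ 0 := by positivity
          have e : ((Finset.univ.image g).card : ℝ)
              * (2 * (δ / (10 * (((Finset.univ.image g).card : ℝ) * (Fintype.card Y : ℝ)))))
              = δ / (5 * (Fintype.card Y : ℝ)) := by
            field_simp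
            ring
          rw [e, div_le_div_iff₀ (by positivity) (by norm_num)]
          nlinarith [hδ0.le]
  have hbad4_le : probOf pb bad4 ≤ δ / 4 :=
    hoeff_ind_upper hP0nn hP0sum (fun z : X × Y => Astar (g z.1)) hn hδ40 hδ41
  have hbad5_le : probOf pc bad5 ≤ δ / 4 :=
    hoeff_ind_lower hP0nn hP0sum (fun z : X × Y => Astar (g z.1)) hNtest hδ40 hδ41
  have hB234_le : probOf pb B234 ≤ δ / 5 + (δ / 10 + δ / 4) := by
    refine le_trans (probOf_union_le hpbnn bad2 (fun w => bad3 w ∨ bad4 w)) ?_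
    have := probOf_union_le hpbnn bad3 bad4
    linarith
  -- ## the deterministic implication
  have hkey : ∀ θ : (Fin n0 → X × Y) × (Fin n → X × Y) × (Fin Ntest → X × Y),
      ¬ bad1 θ.1 → ¬ B234 θ.2.1 → ¬ bad5 θ.2.2 →
      fracOf (Finset.univ : Finset (Fin n)) (fun i =>
          0 <
            ((n : ℝ) / N) *
                (margX (empDist fun j => h (θ.2.1 j)) (g (θ.2.1 i).1)
                  - 2 * hoeffR δt n)
              - (1 - (n : ℝ) / N) *
                  maxOver ystar (fun y' =>
                    empDist θ.2.1 (g (θ.2.1 i).1, y')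
                      - empDist θ.2.1 (g (θ.2.1 i).1, ystar))
              - 2 * (1 - (n : ℝ) / N) * (hoeffR δt n0 + hoeffR δt n)
              - ε / (1 - ε))
        - hoeffR (δ / 4) n - hoeffR (δ / 4) Ntest
      ≤ fracOf (Finset.univ : Finset (Fin Ntest))
          (fun i => mhat θ.1 θ.2.1 (g (θ.2.2 i).1) = ystar) := by
    rintro ⟨w0, w, wt⟩ hnb1 hnb234 hnb5
    have hnb2 : ¬ bad2 w := fun hc => hnb234 (Or.inl hc)
    have hnb3 : ¬ bad3 w := fun hc => hnb234 (Or.inr (Or.inl hc))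
    have hnb4 : ¬ bad4 w := fun hc => hnb234 (Or.inr (Or.inr hc))
    -- concentration facts from the complements of the bad events
    have hG1 : ∀ z : X × Y, z.1 ∈ Set.range g →
        P0 z - hoeffR δt n0 ≤ empDist w0 z ∧ empDist w0 z ≤ P0 z + hoeffR δt n0 := by
      intro z hz
      obtain ⟨x0, hx0⟩ := hz
      have hmem : z ∈ (Finset.univ.image g) ×ˢ (Finset.univ : Finset Y) := by
        rw [Finset.mem_product]
        exact ⟨Finset.mem_image.2 ⟨x0, Finset.mem_univ x0, hx0⟩, Finset.mem_univ z.2⟩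
      simp only [hbad1] at hnb1
      push_neg at hnb1
      obtain ⟨h1, h2⟩ := hnb1 z hmem
      exact ⟨h2.le, h1.le⟩
    have hG2 : ∀ z : X × Y, z.1 ∈ Set.range g →
        P0 z - hoeffR δt n ≤ empDist w z ∧ empDist w z ≤ P0 z + hoeffR δt n := by
      intro z hz
      obtain ⟨x0, hx0⟩ := hz
      have hmem : z ∈ (Finset.univ.image g) ×ˢ (Finset.univ : Finset Y) := by
        rw [Finset.mem_product]
        exact ⟨Finset.mem_image.2 ⟨x0, Finset.mem_univ x0, hx0⟩, Finset.mem_univ z.2⟩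
      simp only [hbad2] at hnb2
      push_neg at hnb2
      obtain ⟨h1, h2⟩ := hnb2 z hmem
      exact ⟨h2.le, h1.le⟩
    have hG3 : ∀ xs, xs ∈ Set.range g →
        probOf P0 (fun z => g z.1 = xs) - hoeffR δt n
            ≤ margX (empDist fun i => h (w i)) xs
          ∧ margX (empDist fun i => h (w i)) xs
            ≤ probOf P0 (fun z => g z.1 = xs) + hoeffR δt n := by
      intro xs hxs
      obtain ⟨x0, hx0⟩ := hxs
      have hmem : xs ∈ Finset.univ.image g := Finset.mem_image.2 ⟨x0, Finset.mem_univ x0, hx0⟩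
      simp only [hbad3] at hnb3
      push_neg at hnb3
      obtain ⟨h1, h2⟩ := hnb3 xs hmem
      exact ⟨h2.le, h1.le⟩
    -- the chain of inequalities
    have htrain : fracOf (Finset.univ : Finset (Fin n)) (fun i =>
        0 <
          ((n : ℝ) / N) *
              (margX (empDist fun j => h (w j)) (g (w i).1)
                - 2 * hoeffR δt n)
            - (1 - (n : ℝ) / N) *
                maxOver ystar (fun y' =>
                  empDist w (g (w i).1, y')
                    - empDist w (g (w i).1, ystar))
            - 2 * (1 - (n : ℝ) / N) * (hoeffR δt n0 + hoeffR δt n)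
            - ε / (1 - ε))
        ≤ fracOf (Finset.univ : Finset (Fin n)) (fun i => Astar (g (w i).1)) := by
      refine fracOf_mono fun i hi => ?_
      rw [hAstar]
      exact cond_to_astar hY hn0 hn hN P0 g ystar h hR0nn hR1nn w hG2 hG3 (w i).1 hi
    have htest : fracOf (Finset.univ : Finset (Fin Ntest)) (fun i => Astar (g (wt i).1))
        ≤ fracOf (Finset.univ : Finset (Fin Ntest))
            (fun i => mhat w0 w (g (wt i).1) = ystar) := by
      refine fracOf_mono fun i hi => ?_
      refine det_core hY hn0 hn hN P0 g ystar h hstrat hε0 hε1 hR0nn hR1nn w0 w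
        (mhat w0 w) (hsub w0 w) hG1 hG3 (wt i).1 ?_
      rw [hAstar] at hi
      exact hi
    simp only [hbad4] at hnb4
    simp only [hbad5] at hnb5
    push_neg at hnb4 hnb5
    linarith
  -- ## putting everything together
  rw [probOf_compl hpT1]
  refine sub_le_sub_left ?_ 1
  refine le_trans (probOf_mono hpTnn
    (B := fun θ => bad1 θ.1 ∨ B234 θ.2.1 ∨ bad5 θ.2.2) ?_) ?_
  · intro θ hng
    by_contra hb
    push_neg at hb
    exact hng (hkey θ hb.1 hb.2.1 hb.2.2)
  · have hu1 := probOf_union_le hpTnn (fun θ => bad1 θ.1)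
      (fun θ => B234 θ.2.1 ∨ bad5 θ.2.2)
    have hu2 := probOf_union_le hpTnn
      (fun θ : (Fin n0 → X × Y) × (Fin n → X × Y) × (Fin Ntest → X × Y) => B234 θ.2.1)
      (fun θ => bad5 θ.2.2)
    have hm1 : probOf (fun θ : (Fin n0 → X × Y) × (Fin n → X × Y) × (Fin Ntest → X × Y) =>
        (∏ i, P0 (θ.1 i)) * (∏ i, P0 (θ.2.1 i)) * ∏ i, P0 (θ.2.2 i))
        (fun θ => bad1 θ.1) = probOf pa bad1 := by
      rw [hpT]
      exact probOf_prod_left pa pbc hpbc1 bad1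
    have hm2 : probOf (fun θ : (Fin n0 → X × Y) × (Fin n → X × Y) × (Fin Ntest → X × Y) =>
        (∏ i, P0 (θ.1 i)) * (∏ i, P0 (θ.2.1 i)) * ∏ i, P0 (θ.2.2 i))
        (fun θ => B234 θ.2.1) = probOf pb B234 := by
      rw [hpT]
      exact (probOf_prod_right pa pbc hpa1 (fun bc => B234 bc.1)).trans
        (probOf_prod_left pb pc hpc1 B234)
    have hm3 : probOf (fun θ : (Fin n0 → X × Y) × (Fin n → X × Y) × (Fin Ntest → X × Y) =>
        (∏ i, P0 (θ.1 i)) * (∏ i, P0 (θ.2.1 i)) * ∏ i, P0 (θ.2.2 i))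
        (fun θ => bad5 θ.2.2) = probOf pc bad5 := by
      rw [hpT]
      exact (probOf_prod_right pa pbc hpa1 (fun bc => bad5 bc.2)).trans
        (probOf_prod_right pb pc hpb1 bad5)
    rw [hm1] at hu1
    rw [hm2, hm3] at hu2
    linarith [hbad1_le, hB234_le, hbad5_le, hu1, hu2]
end
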